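/- arXiv:2506.04657 — 4 statements merged into one kernel-verified Lean document; each statement's English description precedes it below -/
import Mathlib

section
/- Let k ≥ 2. If a position S = (x_1, ..., x_n) with x_3 ≤ 1 and β(S) odd is a P-position in misère k-Bounded Greedy Nim, then R(x_1 − x_2) = 0. -/
/-- One move in `k`-bounded greedy Nim on a descending-sorted list of heaps:
remove `t` stones with `1 ≤ t ≤ min x₁ k` from a heap with the largest
number of stones `x₁` (the head), and re-sort the result in descending order. -/
def BFollower (k : ℕ) (S S' : List ℕ) : Prop :=
  ∃ t : ℕ, 1 ≤ t ∧ t ≤ min S.headI k ∧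
    S' = List.orderedInsert (· ≥ ·) (S.headI - t) S.tail

/-- One move in greedy Nim: remove any `t` stones with `1 ≤ t ≤ x₁` from a heap
with the largest number of stones `x₁`, and re-sort in descending order. -/
def GFollower (S S' : List ℕ) : Prop :=
  ∃ t : ℕ, 1 ≤ t ∧ t ≤ S.headI ∧
    S' = List.orderedInsert (· ≥ ·) (S.headI - t) S.tail

theorem BFollower.sum_lt {k : ℕ} {S S' : List ℕ} (h : BFollower k S S') :
    S'.sum < S.sum := by
  obtain ⟨t, ht1, ht2, rfl⟩ := h
  have htx : t ≤ S.headI := le_trans ht2 (min_le_left _ _)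
  match S with
  | [] => simp [List.headI] at htx; omega
  | a :: l =>
      have hperm := List.perm_orderedInsert (· ≥ ·) (a - t) l
      have hsum : (List.orderedInsert (· ≥ ·) (a - t) l).sum = (a - t) + l.sum :=
        hperm.sum_eq
      simp only [List.headI, List.tail] at *
      simp [hsum]
      omega

theorem GFollower.sum_lt {S S' : List ℕ} (h : GFollower S S') :
    S'.sum < S.sum := by
  obtain ⟨t, ht1, ht2, rfl⟩ := h
  match S with
  | [] => simp [List.headI] at ht2; omega
  | a :: l =>
      have hperm := List.perm_orderedInsert (· ≥ ·) (a - t) l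
      have hsum : (List.orderedInsert (· ≥ ·) (a - t) l).sum = (a - t) + l.sum :=
        hperm.sum_eq
      simp only [List.headI, List.tail] at *
      simp [hsum]
      omega

/-- `S` is a P-position of `k`-bounded greedy Nim under the normal play
convention: the all-zero position is a P-position (it has no followers), and a
position is a P-position iff every follower is an N-position. -/
def NormalBP (k : ℕ) (S : List ℕ) : Prop :=
  ∀ S', BFollower k S S' → ¬ NormalBP k S'
termination_by S.sum
decreasing_by exact BFollower.sum_lt (by assumption)

/-- `S` is a P-position of `k`-bounded greedy Nim under the misère play
convention: the all-zero position is an N-position, and any other position is a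
P-position iff every follower is an N-position. -/
def MisereBP (k : ℕ) (S : List ℕ) : Prop :=
  S.sum ≠ 0 ∧ ∀ S', BFollower k S S' → ¬ MisereBP k S'
termination_by S.sum
decreasing_by exact BFollower.sum_lt (by assumption)

/-- Normal-play P-positions of greedy Nim. -/
def NormalGP (S : List ℕ) : Prop :=
  ∀ S', GFollower S S' → ¬ NormalGP S'
termination_by S.sum
decreasing_by exact GFollower.sum_lt (by assumption)

/-- Misère-play P-positions of greedy Nim. -/
def MisereGP (S : List ℕ) : Prop :=
  S.sum ≠ 0 ∧ ∀ S', GFollower S S' → ¬ MisereGP S'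
termination_by S.sum
decreasing_by exact GFollower.sum_lt (by assumption)

/-- `R a` is the remainder of `a` modulo `k + 1`. -/
def R (k a : ℕ) : ℕ := a % (k + 1)

/-- The `j`-th heap (1-based) of the position `S`. -/
def heap (S : List ℕ) (j : ℕ) : ℕ := S.getD (j - 1) 0

/-- `β(S)`: `0` if `x₃ = 0`, and `max { j : x_j = x₃ } - 2` otherwise. -/
noncomputable def beta (S : List ℕ) : ℕ :=
  if heap S 3 = 0 then 0
  else sSup {j : ℕ | 1 ≤ j ∧ j ≤ S.length ∧ heap S j = heap S 3} - 2

/-- `α(S)`: `0` if `x₁ = 0`, and `max { j : x_j = x₁ }` otherwise. -/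
noncomputable def alpha (S : List ℕ) : ℕ :=
  if heap S 1 = 0 then 0
  else sSup {j : ℕ | 1 ≤ j ∧ j ≤ S.length ∧ heap S j = heap S 1}

/-- The pair `(x₁, x₂)` (with `x₁ ≥ x₂`) is `k`-nice. -/
def KNice (k x₁ x₂ : ℕ) : Prop :=
  (R k x₁ = 0 ∧ R k x₂ = 1) ∨
  (R k (x₁ - x₂) = 0 ∧ 2 ≤ R k x₂) ∨
  (R k x₁ = 1 ∧ R k x₂ = 0)

/-- The triple `(x₁, x₂, x₃)` (with `x₁ ≥ x₂ ≥ x₃`) is `k`-good. -/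
def KGood (k x₁ x₂ x₃ : ℕ) : Prop :=
  (R k (x₁ - x₂) = k ∧ R k (x₂ - x₃) = 0) ∨
  (R k (x₁ - x₂) = 0 ∧ 1 ≤ R k (x₂ - x₃) ∧ R k (x₂ - x₃) ≤ k - 1) ∨
  (R k (x₁ - x₂) = 1 ∧ R k (x₂ - x₃) = k)


/-- The condition of the main theorem characterizing misère P-positions of
`k`-bounded greedy Nim. -/
noncomputable def MiserePCond (k : ℕ) (S : List ℕ) : Prop :=
  (heap S 3 ≤ 1 ∧ Even (beta S) ∧ KNice k (heap S 1) (heap S 2)) ∨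
  (heap S 3 ≤ 1 ∧ Odd (beta S) ∧ R k (heap S 1 - heap S 2) = 0) ∨
  (2 ≤ heap S 3 ∧ Even (beta S) ∧ R k (heap S 1 - heap S 2) = 0) ∨
  (2 ≤ heap S 3 ∧ Odd (beta S) ∧ KGood k (heap S 1) (heap S 2) (heap S 3))

namespace Stmt13Aux

/-- Canonical list for positions with third-largest heap at most 1. -/
def L (a b m z : ℕ) : List ℕ := a :: b :: (List.replicate m 1 ++ List.replicate z 0)

lemma L_sum (a b m z : ℕ) : (L a b m z).sum = a + b + m := by
  simp [L, List.sum_replicate]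
  omega

lemma ins_one_le (v m z : ℕ) (hv : 1 ≤ v) :
    List.orderedInsert (· ≥ ·) v (List.replicate m 1 ++ List.replicate z 0)
      = v :: (List.replicate m 1 ++ List.replicate z 0) := by
  cases m with
  | zero =>
      cases z with
      | zero => rfl
      | succ z => simp [List.replicate_succ, List.orderedInsert]
  | succ m => simp [List.replicate_succ, List.orderedInsert, hv]

lemma ins_zero (m z : ℕ) :
    List.orderedInsert (· ≥ ·) 0 (List.replicate m 1 ++ List.replicate z 0)
      = List.replicate m 1 ++ List.replicate (z + 1) 0 := by
  induction m with
  | zero =>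
      cases z with
      | zero => rfl
      | succ z => simp [List.replicate_succ, List.orderedInsert]
  | succ m ih =>
      simp [List.replicate_succ, List.orderedInsert] at *
      exact ih

lemma ins_tail (v a b m z : ℕ) :
    List.orderedInsert (· ≥ ·) v ((L a b m z).tail)
      = if b ≤ v then L v b m z
        else if 1 ≤ v then L b v m z
        else b :: (List.replicate m 1 ++ List.replicate (z + 1) 0) := by
  simp only [L, List.tail_cons]
  by_cases hbv : b ≤ v
  · rw [if_pos hbv]
    simp [List.orderedInsert, hbv, L]
  · rw [if_neg hbv]
    by_cases hv : 1 ≤ v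
    · rw [if_pos hv]
      simp [List.orderedInsert, hbv, L, ins_one_le v m z hv]
    · rw [if_neg hv]
      have hv0 : v = 0 := by omega
      subst hv0
      simp [List.orderedInsert, hbv, ins_zero]

lemma headI_L (a b m z : ℕ) : (L a b m z).headI = a := rfl

lemma BFollower_L {k a b m z : ℕ} {S' : List ℕ} :
    BFollower k (L a b m z) S' ↔ ∃ t, 1 ≤ t ∧ t ≤ min a k ∧
      S' = (if b ≤ a - t then L (a - t) b m z
            else if 1 ≤ a - t then L b (a - t) m z
            else b :: (List.replicate m 1 ++ List.replicate (z + 1) 0)) := by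
  unfold BFollower
  simp only [headI_L, ins_tail]

/-- The characterization condition for positions with `x₃ ≤ 1`. -/
def Cond (k a b m : ℕ) : Prop :=
  if m % 2 = 1 then (a - b) % (k + 1) = 0 else KNice k a b

lemma le_of_dvd_dvd {r u v : ℕ} (h1 : r ∣ u) (h2 : r ∣ v) (h : v < u) : v + r ≤ u := by
  have hd : r ∣ u - v := Nat.dvd_sub h1 h2
  have : r ≤ u - v := Nat.le_of_dvd (by omega) hd
  omega

lemma mod_eq_iff_dvd_sub {r b c : ℕ} (hc : c < r) (hcb : c ≤ b) :
    b % r = c ↔ r ∣ (b - c) := by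
  constructor
  · intro h
    refine ⟨b / r, ?_⟩
    have h2 := Nat.div_add_mod b r
    omega
  · rintro ⟨q, hq⟩
    have hb : b = c + r * q := by omega
    rw [hb, Nat.add_mul_mod_self_left, Nat.mod_eq_of_lt hc]

lemma mod_zero_iff {r b : ℕ} (hr : 0 < r) : b % r = 0 ↔ r ∣ b := by
  have := mod_eq_iff_dvd_sub (r := r) (b := b) (c := 0) hr (Nat.zero_le b)
  simpa using this

end Stmt13Aux
namespace Stmt13Aux

lemma not_cond_zero {k : ℕ} (hk : 2 ≤ k) : ¬ Cond k 0 0 0 := by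
  simp only [Cond, KNice, R]
  norm_num

theorem main (k : ℕ) (hk : 2 ≤ k) :
    ∀ N a b m z, a + b + m ≤ N → b ≤ a → (1 ≤ m → 1 ≤ b) →
      (MisereBP k (L a b m z) ↔ Cond k a b m) := by
  intro N
  induction N with
  | zero =>
      intro a b m z hN hba hmb
      have ha : a = 0 ∧ b = 0 ∧ m = 0 := by omega
      obtain ⟨ha, hb, hm⟩ := ha
      subst ha; subst hb; subst hm
      rw [MisereBP]
      constructor
      · rintro ⟨h0, -⟩
        simp [L_sum] at h0
      · intro hc
        exact absurd hc (not_cond_zero hk)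
  | succ N ih =>
      intro a b m z hN hba hmb
      by_cases ha0 : a = 0
      · have hb0 : b = 0 := by omega
        have hm0 : m = 0 := by
          by_contra h
          have := hmb (by omega)
          omega
        subst ha0; subst hb0; subst hm0
        rw [MisereBP]
        constructor
        · rintro ⟨h0, -⟩
          simp [L_sum] at h0
        · intro hc
          exact absurd hc (not_cond_zero hk)
      · have ha : 1 ≤ a := by omega
        constructor
        · -- P → Cond (by contradiction: from ¬Cond build a Cond-follower)
          intro hP
          by_contra hc
          rw [MisereBP] at hP
          obtain ⟨hsum, hfol⟩ := hP
          have key : ∀ a' b' m' z', a' + b' + m' ≤ N → b' ≤ a' → (1 ≤ m' → 1 ≤ b') →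
              Cond k a' b' m' → BFollower k (L a b m z) (L a' b' m' z') → False :=
            fun a' b' m' z' h1 h2 h3 h4 h5 => hfol _ h5 ((ih a' b' m' z' h1 h2 h3).mpr h4)
          by_cases hm : m % 2 = 1
          · -- m odd : take t = (a-b) % (k+1)
            simp only [Cond, if_pos hm] at hc
            have hmlt : (a - b) % (k+1) < k+1 := Nat.mod_lt _ (by omega)
            have hmle : (a - b) % (k+1) ≤ a - b := Nat.mod_le _ _
            have hdvd : (k+1) ∣ (a - (a - b) % (k+1) - b) := by
              refine ⟨(a - b)/(k+1), ?_⟩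
              have := Nat.div_add_mod (a - b) (k+1)
              omega
            refine key (a - (a - b) % (k+1)) b m z (by omega) (by omega) hmb ?_ ?_
            · simp only [Cond, if_pos hm]
              rw [mod_zero_iff (by omega)]
              exact hdvd
            · rw [BFollower_L]
              exact ⟨(a - b) % (k+1), by omega, by omega,
                by rw [if_pos (by omega : b ≤ a - (a - b) % (k+1))]⟩
          · -- m even, ¬ KNice
            simp only [Cond, if_neg hm, KNice, R] at hc
            push_neg at hc
            obtain ⟨hc1, hc2, hc3⟩ := hc
            by_cases hf0 : b % (k+1) = 0
            · have he1 : a % (k+1) ≠ 1 := fun h => hc3 h hf0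
              have hdb : (k+1) ∣ b := (mod_zero_iff (by omega)).mp hf0
              by_cases he0 : a % (k+1) = 0
              · have hda : (k+1) ∣ a := (mod_zero_iff (by omega)).mp he0
                have har : k+1 ≤ a := Nat.le_of_dvd (by omega) hda
                have hak1 : (a - k) % (k+1) = 1 := by
                  rw [mod_eq_iff_dvd_sub (by omega) (by omega)]
                  have h' : a - k - 1 = a - (k+1) := by omega
                  rw [h']
                  exact Nat.dvd_sub hda dvd_rfl
                by_cases hble : b ≤ a - k
                · refine key (a - k) b m z (by omega) hble hmb ?_ ?_
                  · simp only [Cond, if_neg hm, KNice, R]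
                    right; right
                    exact ⟨hak1, hf0⟩
                  · rw [BFollower_L]
                    exact ⟨k, by omega, by omega, by rw [if_pos hble]⟩
                · have hab : a = b := by
                    rcases Nat.lt_or_ge b a with h | h
                    · have := le_of_dvd_dvd hda hdb h
                      omega
                    · omega
                  refine key b (a - k) m z (by omega) (by omega) (fun _ => by omega) ?_ ?_
                  · simp only [Cond, if_neg hm, KNice, R]
                    left
                    exact ⟨hf0, hak1⟩
                  · rw [BFollower_L]
                    refine ⟨k, by omega, by omega, ?_⟩
                    rw [if_neg hble, if_pos (by omega : 1 ≤ a - k)]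
              · -- e := a % (k+1) ≥ 2, take t = e - 1
                have helt : a % (k+1) < k+1 := Nat.mod_lt _ (by omega)
                have hele : a % (k+1) ≤ a := Nat.mod_le _ _
                have he2 : 2 ≤ a % (k+1) := by omega
                have hdae : (k+1) ∣ (a - a % (k+1)) := by
                  refine ⟨a/(k+1), ?_⟩
                  have := Nat.div_add_mod a (k+1)
                  omega
                have hat1 : (a - (a % (k+1) - 1)) % (k+1) = 1 := by
                  rw [mod_eq_iff_dvd_sub (by omega) (by omega)]
                  have h' : a - (a % (k+1) - 1) - 1 = a - a % (k+1) := by omega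
                  rw [h']
                  exact hdae
                by_cases hble : b ≤ a - (a % (k+1) - 1)
                · refine key (a - (a % (k+1) - 1)) b m z (by omega) hble hmb ?_ ?_
                  · simp only [Cond, if_neg hm, KNice, R]
                    right; right
                    exact ⟨hat1, hf0⟩
                  · rw [BFollower_L]
                    exact ⟨a % (k+1) - 1, by omega, by omega, by rw [if_pos hble]⟩
                · exfalso
                  have hblt : a - a % (k+1) < b := by omega
                  have := le_of_dvd_dvd hdb hdae hblt
                  omega
            · by_cases hf1 : b % (k+1) = 1
              · have hb1 : 1 ≤ b := by
                  rcases Nat.eq_zero_or_pos b with h | h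
                  · rw [h] at hf1; simp at hf1
                  · exact h
                have hdb1 : (k+1) ∣ (b - 1) := by
                  rw [← mod_eq_iff_dvd_sub (by omega) hb1]
                  exact hf1
                have he0 : a % (k+1) ≠ 0 := fun h => hc1 h hf1
                have helt : a % (k+1) < k+1 := Nat.mod_lt _ (by omega)
                have hele : a % (k+1) ≤ a := Nat.mod_le _ _
                have hdae : (k+1) ∣ (a - a % (k+1)) := by
                  refine ⟨a/(k+1), ?_⟩
                  have := Nat.div_add_mod a (k+1)
                  omega
                have hae0 : (a - a % (k+1)) % (k+1) = 0 := (mod_zero_iff (by omega)).mpr hdae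
                by_cases hble : b ≤ a - a % (k+1)
                · refine key (a - a % (k+1)) b m z (by omega) hble hmb ?_ ?_
                  · simp only [Cond, if_neg hm, KNice, R]
                    left
                    exact ⟨hae0, hf1⟩
                  · rw [BFollower_L]
                    exact ⟨a % (k+1), by omega, by omega, by rw [if_pos hble]⟩
                · by_cases hae1 : 1 ≤ a - a % (k+1)
                  · have heq : a - a % (k+1) = b - 1 := by
                      rcases Nat.lt_or_ge (a - a % (k+1)) (b - 1) with h | h
                      · exfalso
                        have := le_of_dvd_dvd hdb1 hdae h
                        omega
                      · omega
                    refine key b (a - a % (k+1)) m z (by omega) (by omega) (fun _ => hae1) ?_ ?_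
                    · simp only [Cond, if_neg hm, KNice, R]
                      right; right
                      exact ⟨hf1, hae0⟩
                    · rw [BFollower_L]
                      refine ⟨a % (k+1), by omega, by omega, ?_⟩
                      rw [if_neg hble, if_pos hae1]
                  · have hak : a = a % (k+1) := by omega
                    have hba1 : b = 1 := by
                      have : b % (k+1) = b := Nat.mod_eq_of_lt (by omega)
                      omega
                    cases m with
                    | zero =>
                        refine key 1 0 0 z (by omega) (by omega) (by omega) ?_ ?_
                        · have hK : KNice k 1 0 := by
                            simp only [KNice, R]
                            right; right
                            exact ⟨Nat.mod_eq_of_lt (by omega), Nat.zero_mod _⟩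
                          simpa [Cond] using hK
                        · rw [BFollower_L]
                          refine ⟨a, by omega, by omega, ?_⟩
                          rw [if_neg (by omega), if_neg (by omega)]
                          simp [L, hba1, List.replicate_succ]
                    | succ m' =>
                        have hm' : m' % 2 = 1 := by omega
                        refine key 1 1 m' (z+1) (by omega) (by omega) (fun _ => le_refl 1) ?_ ?_
                        · simp only [Cond, if_pos hm']
                          simp
                        · rw [BFollower_L]
                          refine ⟨a, by omega, by omega, ?_⟩
                          rw [if_neg (by omega), if_neg (by omega)]
                          simp [L, hba1, List.replicate_succ]
              · have hf2 : 2 ≤ b % (k+1) := by omega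
                have hab : (a - b) % (k+1) ≠ 0 := fun h => by have := hc2 h; omega
                have hmlt : (a - b) % (k+1) < k+1 := Nat.mod_lt _ (by omega)
                have hmle : (a - b) % (k+1) ≤ a - b := Nat.mod_le _ _
                have hdvd : (k+1) ∣ (a - (a - b) % (k+1) - b) := by
                  refine ⟨(a - b)/(k+1), ?_⟩
                  have := Nat.div_add_mod (a - b) (k+1)
                  omega
                refine key (a - (a - b) % (k+1)) b m z (by omega) (by omega) hmb ?_ ?_
                · simp only [Cond, if_neg hm, KNice, R]
                  right; left
                  exact ⟨(mod_zero_iff (by omega)).mpr hdvd, hf2⟩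
                · rw [BFollower_L]
                  exact ⟨(a - b) % (k+1), by omega, by omega,
                    by rw [if_pos (by omega : b ≤ a - (a - b) % (k+1))]⟩
        · -- Cond → P
          intro hc
          rw [MisereBP]
          refine ⟨by rw [L_sum]; omega, ?_⟩
          intro S' hS'
          rw [BFollower_L] at hS'
          obtain ⟨t, ht1, htmin, rfl⟩ := hS'
          have hta : t ≤ a := le_trans htmin (min_le_left _ _)
          have htk : t ≤ k := le_trans htmin (min_le_right _ _)
          by_cases h1 : b ≤ a - t
          · rw [if_pos h1, ih (a - t) b m z (by omega) h1 hmb]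
            intro hc'
            by_cases hm : m % 2 = 1
            · simp only [Cond, if_pos hm] at hc hc'
              rw [mod_zero_iff (by omega)] at hc hc'
              have := le_of_dvd_dvd hc hc' (by omega : a - t - b < a - b)
              omega
            · simp only [Cond, if_neg hm, KNice, R] at hc hc'
              rcases hc with ⟨h01, h02⟩ | ⟨h03, h04⟩ | ⟨h05, h06⟩
              · rcases hc' with ⟨g1, g2⟩ | ⟨g3, g4⟩ | ⟨g5, g6⟩
                · rw [mod_zero_iff (by omega)] at h01 g1
                  have := le_of_dvd_dvd h01 g1 (by omega : a - t < a)
                  omega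
                · omega
                · omega
              · rcases hc' with ⟨g1, g2⟩ | ⟨g3, g4⟩ | ⟨g5, g6⟩
                · omega
                · rw [mod_zero_iff (by omega)] at h03 g3
                  have := le_of_dvd_dvd h03 g3 (by omega : a - t - b < a - b)
                  omega
                · omega
              · have hda1 : (k+1) ∣ (a - 1) := by
                  rw [← mod_eq_iff_dvd_sub (by omega) ha]
                  exact h05
                rcases hc' with ⟨g1, g2⟩ | ⟨g3, g4⟩ | ⟨g5, g6⟩
                · omega
                · omega
                · rcases Nat.eq_zero_or_pos (a - t) with h | h
                  · rw [h] at g5; simp at g5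
                  · rw [mod_eq_iff_dvd_sub (by omega) h] at g5
                    have := le_of_dvd_dvd hda1 g5 (by omega : a - t - 1 < a - 1)
                    omega
          · rw [if_neg h1]
            by_cases h2 : 1 ≤ a - t
            · rw [if_pos h2, ih b (a - t) m z (by omega) (by omega) (fun _ => h2)]
              intro hc'
              by_cases hm : m % 2 = 1
              · simp only [Cond, if_pos hm] at hc hc'
                rw [mod_zero_iff (by omega)] at hc hc'
                have hab0 : a - b = 0 := by
                  rcases Nat.eq_zero_or_pos (a - b) with h | h
                  · exact h
                  · have := Nat.le_of_dvd h hc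
                    omega
                have hbt : b - (a - t) = t := by omega
                rw [hbt] at hc'
                have := Nat.le_of_dvd (by omega) hc'
                omega
              · simp only [Cond, if_neg hm, KNice, R] at hc hc'
                rcases hc with ⟨h01, h02⟩ | ⟨h03, h04⟩ | ⟨h05, h06⟩
                · have hb2 : 1 ≤ b := by omega
                  have hdb1 : (k+1) ∣ (b - 1) := by
                    rw [← mod_eq_iff_dvd_sub (by omega) hb2]
                    exact h02
                  have hda : (k+1) ∣ a := (mod_zero_iff (by omega)).mp h01
                  rcases hc' with ⟨g1, g2⟩ | ⟨g3, g4⟩ | ⟨g5, g6⟩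
                  · omega
                  · rw [mod_zero_iff (by omega)] at g3
                    have gd : (k+1) ∣ (a - t - 1) := by
                      have h' : (b - 1) - (b - (a - t)) = a - t - 1 := by omega
                      rw [← h']
                      exact Nat.dvd_sub hdb1 g3
                    have hat1 : (a - t) % (k+1) = 1 := by
                      rw [mod_eq_iff_dvd_sub (by omega) h2]
                      exact gd
                    omega
                  · rw [mod_zero_iff (by omega)] at g6
                    have := le_of_dvd_dvd hda g6 (by omega : a - t < a)
                    omega
                · rw [mod_zero_iff (by omega)] at h03
                  have hab0 : a - b = 0 := by
                    rcases Nat.eq_zero_or_pos (a - b) with h | h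
                    · exact h
                    · have := Nat.le_of_dvd h h03
                      omega
                  rcases hc' with ⟨g1, g2⟩ | ⟨g3, g4⟩ | ⟨g5, g6⟩
                  · omega
                  · rw [mod_zero_iff (by omega)] at g3
                    have hbt : b - (a - t) = t := by omega
                    rw [hbt] at g3
                    have := Nat.le_of_dvd (by omega) g3
                    omega
                  · omega
                · have hb2 : 1 ≤ b := by omega
                  have hdb : (k+1) ∣ b := (mod_zero_iff (by omega)).mp h06
                  have hda1 : (k+1) ∣ (a - 1) := by
                    rw [← mod_eq_iff_dvd_sub (by omega) ha]
                    exact h05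
                  have hblta : b < a := by
                    rcases Nat.lt_or_ge b a with h | h
                    · exact h
                    · exfalso
                      have hab : a = b := by omega
                      rw [← hab] at hdb
                      have := le_of_dvd_dvd hdb hda1 (by omega : a - 1 < a)
                      omega
                  have hd2 : (k+1) ∣ (a - 1 - b) := Nat.dvd_sub hda1 hdb
                  have hab1 : a = b + 1 := by
                    rcases Nat.eq_zero_or_pos (a - 1 - b) with h | h
                    · omega
                    · have := Nat.le_of_dvd h hd2
                      omega
                  rcases hc' with ⟨g1, g2⟩ | ⟨g3, g4⟩ | ⟨g5, g6⟩
                  · rw [mod_eq_iff_dvd_sub (by omega) h2] at g2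
                    have h' : a - t - 1 = b - t := by omega
                    rw [h'] at g2
                    have := le_of_dvd_dvd hdb g2 (by omega : b - t < b)
                    omega
                  · rw [mod_zero_iff (by omega)] at g3
                    have h' : b - (a - t) = t - 1 := by omega
                    rw [h'] at g3
                    have ht2 : t - 1 = 0 ∨ k + 1 ≤ t - 1 := by
                      rcases Nat.eq_zero_or_pos (t - 1) with h | h
                      · exact Or.inl h
                      · exact Or.inr (Nat.le_of_dvd h g3)
                    omega
                  · omega
            · -- t = a
              rw [if_neg h2]
              cases m with
              | zero =>
                  have hL : (b :: (List.replicate 0 1 ++ List.replicate (z+1) 0)) = L b 0 0 z := by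
                    simp [L, List.replicate_succ]
                  rw [hL, ih b 0 0 z (by omega) (by omega) (by omega)]
                  intro hc'
                  have hKab : KNice k a b := by simpa [Cond] using hc
                  have hb1 : b % (k+1) = 1 := by simpa [Cond, KNice, R] using hc'
                  have hak : a % (k+1) = a := Nat.mod_eq_of_lt (by omega)
                  simp only [KNice, R] at hKab
                  rcases hKab with ⟨h01, h02⟩ | ⟨h03, h04⟩ | ⟨h05, h06⟩
                  · omega
                  · omega
                  · omega
              | succ m' =>
                  have hbm : 1 ≤ b := hmb (by omega)
                  have hL : (b :: (List.replicate (m'+1) 1 ++ List.replicate (z+1) 0))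
                      = L b 1 m' (z+1) := by
                    simp [L, List.replicate_succ]
                  rw [hL, ih b 1 m' (z+1) (by omega) hbm (fun _ => le_refl 1)]
                  intro hc'
                  by_cases hm : m' % 2 = 1
                  · have hKab : KNice k a b := by
                      have hmm : ¬ (m' + 1) % 2 = 1 := by omega
                      simpa [Cond, hmm] using hc
                    have hcb1 : (b - 1) % (k+1) = 0 := by simpa [Cond, hm] using hc'
                    rw [mod_zero_iff (by omega)] at hcb1
                    have hak : a % (k+1) = a := Nat.mod_eq_of_lt (by omega)
                    simp only [KNice, R] at hKab
                    rcases hKab with ⟨h01, h02⟩ | ⟨h03, h04⟩ | ⟨h05, h06⟩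
                    · omega
                    · rw [mod_zero_iff (by omega)] at h03
                      have hab0 : a - b = 0 := by
                        rcases Nat.eq_zero_or_pos (a - b) with h | h
                        · exact h
                        · have := Nat.le_of_dvd h h03
                          omega
                      have hbk : b % (k+1) = b := Nat.mod_eq_of_lt (by omega)
                      have : b - 1 = 0 ∨ k + 1 ≤ b - 1 := by
                        rcases Nat.eq_zero_or_pos (b - 1) with h | h
                        · exact Or.inl h
                        · exact Or.inr (Nat.le_of_dvd h hcb1)
                      omega
                    · have hbk : b % (k+1) = b := Nat.mod_eq_of_lt (by omega)
                      omega
                  · have hcb : (a - b) % (k+1) = 0 := by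
                      have hmm : (m' + 1) % 2 = 1 := by omega
                      simpa [Cond, hmm] using hc
                    have hK : KNice k b 1 := by simpa [Cond, hm] using hc'
                    rw [mod_zero_iff (by omega)] at hcb
                    have hab0 : a - b = 0 := by
                      rcases Nat.eq_zero_or_pos (a - b) with h | h
                      · exact h
                      · have := Nat.le_of_dvd h hcb
                        omega
                    have hbk : b % (k+1) = b := Nat.mod_eq_of_lt (by omega)
                    have h1k : (1:ℕ) % (k+1) = 1 := Nat.mod_eq_of_lt (by omega)
                    simp only [KNice, R] at hK
                    rcases hK with ⟨g1, g2⟩ | ⟨g3, g4⟩ | ⟨g5, g6⟩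
                    · omega
                    · omega
                    · omega

end Stmt13Aux
namespace Stmt13Aux

lemma sorted_le_one : ∀ l : List ℕ, l.Pairwise (· ≥ ·) → (∀ x ∈ l, x ≤ 1) →
    ∃ m w, l = List.replicate m 1 ++ List.replicate w 0 := by
  intro l
  induction l with
  | nil => exact fun _ _ => ⟨0, 0, rfl⟩
  | cons x l ihl =>
      intro hs hle
      rw [List.pairwise_cons] at hs
      obtain ⟨hx, hs⟩ := hs
      rcases Nat.eq_zero_or_pos x with h0 | h1
      · have hall : ∀ y ∈ l, y = 0 := by
          intro y hy
          have := hx y hy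
          omega
        refine ⟨0, l.length + 1, ?_⟩
        rw [List.eq_replicate_of_mem hall]
        simp [h0, List.replicate_succ]
      · have hx1 : x = 1 := by
          have := hle x (List.mem_cons_self)
          omega
        obtain ⟨m, w, rfl⟩ := ihl hs (fun y hy => hle y (List.mem_cons_of_mem _ hy))
        exact ⟨m + 1, w, by simp [hx1, List.replicate_succ]⟩

lemma getD_rep_zero (w i : ℕ) : (List.replicate w (0:ℕ)).getD i 0 = 0 := by
  induction w generalizing i with
  | zero => simp
  | succ w ih =>
      cases i with
      | zero => simp [List.replicate_succ]
      | succ i => rw [List.replicate_succ, List.getD_cons_succ, ih]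

lemma getD_rep10 (m w i : ℕ) :
    (List.replicate m 1 ++ List.replicate w (0:ℕ)).getD i 0 = if i < m then 1 else 0 := by
  induction m generalizing i with
  | zero => simp [getD_rep_zero]
  | succ m ih =>
      cases i with
      | zero => simp [List.replicate_succ]
      | succ i =>
          rw [List.replicate_succ, List.cons_append, List.getD_cons_succ, ih i]
          by_cases h : i < m
          · rw [if_pos h, if_pos (by omega)]
          · rw [if_neg h, if_neg (by omega)]

lemma heap_L1 (a b m w : ℕ) : heap (L a b m w) 1 = a := rfl

lemma heap_L2 (a b m w : ℕ) : heap (L a b m w) 2 = b := rfl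

lemma heap_L3' (a b m w j : ℕ) : heap (L a b m w) (j + 3) = if j < m then 1 else 0 := by
  show (L a b m w).getD (j + 3 - 1) 0 = _
  have : j + 3 - 1 = j + 1 + 1 := by omega
  rw [this]
  simp only [L, List.getD_cons_succ]
  exact getD_rep10 m w j

lemma length_L (a b m w : ℕ) : (L a b m w).length = m + w + 2 := by
  simp [L]
  try omega

lemma beta_L (a b m w : ℕ) (hm : 1 ≤ m) : beta (L a b m w) = m := by
  have h3 : heap (L a b m w) 3 = 1 := by
    have h0 := heap_L3' a b m w 0
    rw [if_pos (by omega)] at h0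
    exact h0
  rw [beta, if_neg (by rw [h3]; norm_num), h3]
  have hgr : IsGreatest {j : ℕ | 1 ≤ j ∧ j ≤ (L a b m w).length ∧ heap (L a b m w) j = 1}
      (m + 2) := by
    constructor
    · refine ⟨by omega, by rw [length_L]; omega, ?_⟩
      have := heap_L3' a b m w (m - 1)
      have he : m - 1 + 3 = m + 2 := by omega
      rw [he] at this
      rw [this, if_pos (by omega)]
    · rintro j ⟨hj1, hjlen, hjval⟩
      by_contra hjm
      push_neg at hjm
      have hj3 : j - 3 + 3 = j := by omega
      have := heap_L3' a b m w (j - 3)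
      rw [hj3, hjval, if_neg (by omega)] at this
      exact absurd this (by norm_num)
  rw [hgr.csSup_eq]
  omega

end Stmt13Aux
theorem stmt13 (k : ℕ) (hk : 2 ≤ k) (S : List ℕ) (hn : 4 ≤ S.length) (hsorted : S.Pairwise (· ≥ ·))
    (h3 : heap S 3 ≤ 1) (hb : Odd (beta S)) (hP : MisereBP k S) :
    R k (heap S 1 - heap S 2) = 0 := by
  open Stmt13Aux in
  rcases S with _ | ⟨s1, S⟩
  · simp at hn
  rcases S with _ | ⟨s2, S⟩
  · simp at hn
  rcases S with _ | ⟨s3, S⟩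
  · simp at hn
  rw [List.pairwise_cons] at hsorted
  obtain ⟨h1, hsorted⟩ := hsorted
  rw [List.pairwise_cons] at hsorted
  obtain ⟨h2, hsorted⟩ := hsorted
  rw [List.pairwise_cons] at hsorted
  obtain ⟨h3', hS⟩ := hsorted
  have hs12 : s2 ≤ s1 := h1 s2 (by simp)
  have hs23 : s3 ≤ s2 := h2 s3 (by simp)
  have e3 : heap (s1 :: s2 :: s3 :: S) 3 = s3 := rfl
  have hs3le : s3 ≤ 1 := by rw [e3] at h3; exact h3
  have hs31 : s3 = 1 := by
    by_contra h
    have hs30 : s3 = 0 := by omega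
    rw [beta, if_pos (by rw [e3, hs30])] at hb
    simp at hb
  obtain ⟨m', w, rfl⟩ := Stmt13Aux.sorted_le_one S hS
    (fun y hy => le_trans (h3' y hy) hs3le)
  have hLe : s1 :: s2 :: s3 :: (List.replicate m' 1 ++ List.replicate w 0)
      = Stmt13Aux.L s1 s2 (m' + 1) w := by
    simp [Stmt13Aux.L, hs31, List.replicate_succ]
  rw [hLe] at hP hb ⊢
  have hbeta := Stmt13Aux.beta_L s1 s2 (m' + 1) w (by omega)
  rw [hbeta] at hb
  have hodd : (m' + 1) % 2 = 1 := Nat.odd_iff.mp hb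
  have hs2 : 1 ≤ s2 := by omega
  have hcond := (Stmt13Aux.main k hk (s1 + s2 + (m' + 1)) s1 s2 (m' + 1) w
    le_rfl hs12 (fun _ => hs2)).mp hP
  rw [Stmt13Aux.Cond, if_pos hodd] at hcond
  rw [Stmt13Aux.heap_L1, Stmt13Aux.heap_L2, R]
  exact hcond
end

section
/- Let k ≥ 2. If a position S = (x_1, ..., x_n) satisfies x_3 ≤ 1, β(S) is even, and (x_1, x_2) is k-nice, then S is a P-position in misère k-Bounded Greedy Nim. -/
namespace S16

lemma R_lt (k a : ℕ) : R k a < k + 1 := Nat.mod_lt _ (Nat.succ_pos k)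

lemma R_le (k a : ℕ) : R k a ≤ a := Nat.mod_le _ _

lemma R_eq_self {k a : ℕ} (h : a < k + 1) : R k a = a := Nat.mod_eq_of_lt h

lemma R_zero_iff {k a : ℕ} : R k a = 0 ↔ (k + 1) ∣ a :=
  Nat.dvd_iff_mod_eq_zero.symm

lemma Rsub_zero_iff {k x y : ℕ} (hxy : y ≤ x) : R k (x - y) = 0 ↔ R k x = R k y := by
  rw [R_zero_iff]
  constructor
  · intro h; exact ((Nat.modEq_iff_dvd' hxy).mpr h).symm
  · intro h; exact (Nat.modEq_iff_dvd' hxy).mp h.symm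

lemma R_sub_self (k a : ℕ) : R k (a - R k a) = 0 := by
  rw [R_zero_iff]; exact Nat.dvd_sub_mod a

lemma R_one {k : ℕ} (hk : 1 ≤ k) : R k 1 = 1 := R_eq_self (by omega)

lemma R_zero (k : ℕ) : R k 0 = 0 := Nat.zero_mod _

/-- If `x ≡ x - t [mod k+1]` with `1 ≤ t ≤ k` and `t ≤ x`, contradiction. -/
lemma shift_ne {k x t : ℕ} (ht1 : 1 ≤ t) (htk : t ≤ k) (htx : t ≤ x)
    (h : R k x = R k (x - t)) : False := by
  have h' : R k (x - (x - t)) = 0 := (Rsub_zero_iff (by omega)).mpr h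
  rw [R_zero_iff] at h'
  have hxx : x - (x - t) = t := by omega
  rw [hxx] at h'
  have := Nat.eq_zero_of_dvd_of_lt h' (by omega)
  omega

/-- `R k v ≠ 0` for `1 ≤ v ≤ k`. -/
lemma R_small_ne {k v : ℕ} (h1 : 1 ≤ v) (hk : v ≤ k) : R k v ≠ 0 := by
  rw [R_eq_self (by omega)]; omega

/-- The abstract move function: from `(a,b,e)` (with `x₃ ≤ 1` shape) a move putting the
top heap at `y = a - t` leads to the abstract position `F b e y`. -/
def F (b e y : ℕ) : ℕ × ℕ × ℕ :=
  if b ≤ y then (y, b, e)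
  else if 1 ≤ y then (b, y, e)
  else if 1 ≤ e then (b, 1, e - 1)
  else (b, 0, 0)

/-- Abstract P-position predicate for positions of shape `(a, b, 1^e, 0^*)`. -/
def AbsP (k a b e : ℕ) : Prop :=
  (Even e ∧ KNice k a b) ∨ (¬ Even e ∧ R k (a - b) = 0)

def AbsPT (k : ℕ) (p : ℕ × ℕ × ℕ) : Prop := AbsP k p.1 p.2.1 p.2.2

theorem moveC2 {k a b e t : ℕ} (hk : 2 ≤ k) (hab : b ≤ a) (ht1 : 1 ≤ t) (htk : t ≤ k)
    (hta : t ≤ a) (hbe : 1 ≤ e → 1 ≤ b) (hP : AbsP k a b e) :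
    ¬ AbsPT k (F b e (a - t)) := by
  by_cases hyb : b ≤ a - t
  · -- move of type M1 : target (a-t, b, e)
    simp only [F, if_pos hyb, AbsPT, AbsP]
    rintro (⟨he, hn'⟩ | ⟨hne, h0⟩)
    · rcases hP with ⟨-, hn⟩ | ⟨hne, -⟩
      · rcases hn with ⟨ha0, hb1⟩ | ⟨hab0, hb2⟩ | ⟨ha1, hb0⟩ <;>
          rcases hn' with ⟨hy0, hb1'⟩ | ⟨hyb0, hb2'⟩ | ⟨hy1, hb0'⟩
        · exact shift_ne ht1 htk hta (by omega)
        · omega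
        · omega
        · omega
        · have h1 : R k a = R k b := (Rsub_zero_iff hab).mp hab0
          have h2 : R k (a - t) = R k b := (Rsub_zero_iff hyb).mp hyb0
          exact shift_ne ht1 htk hta (by omega)
        · omega
        · omega
        · omega
        · exact shift_ne ht1 htk hta (by omega)
      · exact hne he
    · rcases hP with ⟨he, -⟩ | ⟨-, hab0⟩
      · exact hne he
      · have h1 : R k a = R k b := (Rsub_zero_iff hab).mp hab0
        have h2 : R k (a - t) = R k b := (Rsub_zero_iff hyb).mp h0
        exact shift_ne ht1 htk hta (by omega)
  · -- a - t < b
    have hby : a - t < b := by omega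
    -- general fact: R k (b - (a-t)) ≠ 0 since 1 ≤ b - (a - t) ≤ k
    have hG : R k (b - (a - t)) ≠ 0 := R_small_ne (by omega) (by omega)
    have hGm : R k b ≠ R k (a - t) := fun h => hG ((Rsub_zero_iff (by omega)).mpr h)
    by_cases hy1 : 1 ≤ a - t
    · -- move of type M2 : target (b, a-t, e)
      simp only [F, if_neg hyb, if_pos hy1, AbsPT, AbsP]
      rintro (⟨he, hn'⟩ | ⟨hne, h0⟩)
      · rcases hP with ⟨-, hn⟩ | ⟨hne, -⟩
        · rcases hn with ⟨ha0, hb1⟩ | ⟨hab0, hb2⟩ | ⟨ha1, hb0⟩ <;>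
            rcases hn' with ⟨hb0', hy1'⟩ | ⟨hby0, hy2'⟩ | ⟨hb1', hy0'⟩
          · omega
          · exact hG hby0
          · exact shift_ne ht1 htk hta (by omega)
          · omega
          · exact hG hby0
          · omega
          · exact shift_ne ht1 htk hta (by omega)
          · exact hG hby0
          · omega
        · exact hne he
      · exact hG h0
    · -- a - t = 0, i.e. t = a ; move of type M3
      have hy0 : a - t = 0 := by omega
      have hta' : t = a := by omega
      have hak : a ≤ k := by omega
      have hb1 : 1 ≤ b := by omega
      have hRa : R k a = a := R_eq_self (by omega)
      by_cases he1 : 1 ≤ e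
      · -- target (b, 1, e-1)
        simp only [F, if_neg hyb, if_neg hy1, if_pos he1, AbsPT, AbsP]
        rintro (⟨he', hn'⟩ | ⟨hne', h0'⟩)
        · -- e - 1 even, so e odd : hP gives R k a = R k b, hence a = b ∈ [1,k]
          rcases hP with ⟨he, -⟩ | ⟨-, hab0⟩
          · rw [Nat.even_iff] at he he'; omega
          · have h1 : R k a = R k b := (Rsub_zero_iff hab).mp hab0
            have hdvd : (k + 1) ∣ a - b := by
              rw [← R_zero_iff]; exact (Rsub_zero_iff hab).mpr h1
            have hab' : a = b := by
              have := Nat.eq_zero_of_dvd_of_lt hdvd (by omega); omega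
            have hRb : R k b = b := by rw [← hab', hRa, hab']
            rcases hn' with ⟨hb0', h11⟩ | ⟨hb10, h12⟩ | ⟨hb1', h10⟩
            · omega
            · rw [R_one (by omega)] at h12; omega
            · rw [R_one (by omega)] at h10; omega
        · -- e - 1 odd, so e even : hP gives KNice a b ; need R k (b - 1) ≠ 0
          rcases hP with ⟨-, hn⟩ | ⟨hne, -⟩
          · have hb1' : R k b = R k 1 := (Rsub_zero_iff hb1).mp h0'
            rw [R_one (by omega)] at hb1'
            rcases hn with ⟨ha0, hbb⟩ | ⟨hab0, hb2⟩ | ⟨ha1, hb0⟩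
            · omega
            · omega
            · omega
          · rw [Nat.even_iff] at hne' hne; omega
      · -- e = 0, target (b, 0, 0)
        simp only [F, if_neg hyb, if_neg hy1, if_neg he1, AbsPT, AbsP]
        have he0 : e = 0 := by omega
        rcases hP with ⟨-, hn⟩ | ⟨hne, -⟩
        · rintro (⟨-, hn'⟩ | ⟨hne', -⟩)
          · rcases hn' with ⟨hb0', h01⟩ | ⟨hb00, h02⟩ | ⟨hb1', h00⟩
            · rw [R_zero] at h01; omega
            · rw [R_zero] at h02; omega
            · rcases hn with ⟨ha0, hbb⟩ | ⟨hab0, hb2⟩ | ⟨ha1, hb0⟩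
              · omega
              · omega
              · omega
          · exact hne' (by decide)
        · exact absurd (by rw [he0]; decide) hne

end S16

namespace S16P2
open S16

theorem moveC3 {k a b e : ℕ} (hk : 2 ≤ k) (hab : b ≤ a) (ha : 1 ≤ a)
    (hbe : 1 ≤ e → 1 ≤ b) (hnP : ¬ AbsP k a b e) :
    ∃ t, 1 ≤ t ∧ t ≤ k ∧ t ≤ a ∧ AbsPT k (F b e (a - t)) := by
  by_cases he : Even e
  · -- e even, ¬ KNice k a b
    have hn : ¬ KNice k a b := fun h => hnP (Or.inl ⟨he, h⟩)
    rcases Nat.lt_or_ge (R k b) 1 with hb0 | hb1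
    · -- R k b = 0
      have hb0 : R k b = 0 := by omega
      have ha1 : R k a ≠ 1 := fun h => hn (Or.inr (Or.inr ⟨h, hb0⟩))
      rcases Nat.eq_zero_or_pos (R k a) with ha0 | hapos
      · -- R k a = 0 : a ≥ k+1, take t = k
        have hdvd : (k + 1) ∣ a := R_zero_iff.mp ha0
        have haM : k + 1 ≤ a := Nat.le_of_dvd (by omega) hdvd
        have hy1 : 1 ≤ a - k := by omega
        have hRy : R k (a - k) = 1 := by
          have h1 : R k (a - k - 1) = 0 := by
            rw [R_zero_iff]
            have : a - k - 1 = a - (k + 1) := by omega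
            rw [this]
            exact Nat.dvd_sub hdvd dvd_rfl
          have := (Rsub_zero_iff hy1).mp h1
          rw [this, R_one (by omega)]
        refine ⟨k, by omega, le_rfl, by omega, ?_⟩
        by_cases hc : b ≤ a - k
        · simp only [F, if_pos hc, AbsPT, AbsP]
          exact Or.inl ⟨he, Or.inr (Or.inr ⟨hRy, hb0⟩)⟩
        · -- a - k < b : then a = b
          have habe : a = b := by
            have h1 : R k (a - b) = 0 := (Rsub_zero_iff hab).mpr (by omega)
            have := Nat.eq_zero_of_dvd_of_lt (R_zero_iff.mp h1) (by omega)
            omega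
          simp only [F, if_neg hc, if_pos hy1, AbsPT, AbsP]
          exact Or.inl ⟨he, Or.inl ⟨hb0, hRy⟩⟩
      · -- R k a ≥ 2, take t = R k a - 1
        have ha2 : 2 ≤ R k a := by omega
        have haa : R k a ≤ a := R_le k a
        have hak : R k a ≤ k := by have := R_lt k a; omega
        refine ⟨R k a - 1, by omega, by omega, by omega, ?_⟩
        have hc : b ≤ a - (R k a - 1) := by
          by_contra hc
          have h1 : a - b < R k a - 1 := by omega
          have h2 : R k a = a - b := by
            have : a = b + (a - b) := by omega
            conv_lhs => rw [R, this, Nat.add_mod]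
            rw [show b % (k+1) = R k b from rfl, hb0,
              show (a-b) % (k+1) = R k (a-b) from rfl,
              R_eq_self (a := a - b) (by omega)]
            simp only [Nat.zero_add]
            exact R_eq_self (by omega)
          omega
        simp only [F, if_pos hc, AbsPT, AbsP]
        have hRy : R k (a - (R k a - 1)) = 1 := by
          have h1 : R k (a - (R k a - 1) - 1) = 0 := by
            have : a - (R k a - 1) - 1 = a - R k a := by omega
            rw [this]; exact R_sub_self k a
          have := (Rsub_zero_iff (by omega)).mp h1
          rw [this, R_one (by omega)]
        exact Or.inl ⟨he, Or.inr (Or.inr ⟨hRy, hb0⟩)⟩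
    · rcases Nat.lt_or_ge (R k b) 2 with hb1' | hb2
      · -- R k b = 1
        have hb1 : R k b = 1 := by omega
        have ha0 : R k a ≠ 0 := fun h => hn (Or.inl ⟨h, hb1⟩)
        have haa : R k a ≤ a := R_le k a
        have hak : R k a ≤ k := by have := R_lt k a; omega
        refine ⟨R k a, by omega, hak, haa, ?_⟩
        by_cases hc : b ≤ a - R k a
        · simp only [F, if_pos hc, AbsPT, AbsP]
          exact Or.inl ⟨he, Or.inl ⟨R_sub_self k a, hb1⟩⟩
        · -- a - R k a < b : derive a - b = R k a - 1
          have hbpos : 1 ≤ b := by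
            rcases Nat.eq_zero_or_pos b with h | h
            · rw [h, R_zero] at hb1; omega
            · exact h
          have hkey : a - b = R k a - 1 := by
            have h1 : a - b < R k a := by omega
            have h2 : R k a = 1 + (a - b) := by
              have : a = b + (a - b) := by omega
              conv_lhs => rw [R, this, Nat.add_mod]
              rw [show b % (k+1) = R k b from rfl, hb1,
                show (a-b) % (k+1) = R k (a-b) from rfl,
                R_eq_self (a := a - b) (by omega)]
              exact R_eq_self (by omega)
            omega
          by_cases hb2' : 2 ≤ b
          · -- y = b - 1 ≥ 1, target (b, b-1, e)
            have hy : a - R k a = b - 1 := by omega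
            have hy1 : 1 ≤ a - R k a := by omega
            simp only [F, if_neg hc, if_pos hy1, AbsPT, AbsP]
            have hRy : R k (a - R k a) = 0 := R_sub_self k a
            rw [hy] at hRy
            rw [hy]
            have hRb1 : R k (b - 1) = 0 := hRy
            exact Or.inl ⟨he, Or.inr (Or.inr ⟨hb1, hRb1⟩)⟩
          · -- b = 1, y = 0
            have hb : b = 1 := by omega
            have hy0 : a - R k a = 0 := by omega
            have hyy : ¬ (1 ≤ a - R k a) := by omega
            by_cases he1 : 1 ≤ e
            · simp only [F, if_neg hc, if_neg hyy, if_pos he1, AbsPT, AbsP]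
              refine Or.inr ⟨?_, ?_⟩
              · rw [Nat.even_iff] at he ⊢
                omega
              · rw [hb]; exact R_zero k
            · simp only [F, if_neg hc, if_neg hyy, if_neg he1, AbsPT, AbsP]
              refine Or.inl ⟨by decide, Or.inr (Or.inr ⟨?_, ?_⟩)⟩
              · rw [hb]; exact R_one (by omega)
              · exact R_zero k
      · -- R k b ≥ 2 : then R k (a-b) ≠ 0
        have hab0 : R k (a - b) ≠ 0 := fun h => hn (Or.inr (Or.inl ⟨h, hb2⟩))
        have hd1 : 1 ≤ R k (a - b) := by omega
        have hdk : R k (a - b) ≤ k := by have := R_lt k (a - b); omega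
        have hdab : R k (a - b) ≤ a - b := R_le k (a - b)
        refine ⟨R k (a - b), hd1, hdk, by omega, ?_⟩
        have hc : b ≤ a - R k (a - b) := by omega
        simp only [F, if_pos hc, AbsPT, AbsP]
        have hRy : R k (a - R k (a - b) - b) = 0 := by
          have : a - R k (a - b) - b = (a - b) - R k (a - b) := by omega
          rw [this]; exact R_sub_self k (a - b)
        exact Or.inl ⟨he, Or.inr (Or.inl ⟨hRy, hb2⟩)⟩
  · -- e odd : R k (a - b) ≠ 0
    have hab0 : R k (a - b) ≠ 0 := fun h => hnP (Or.inr ⟨he, h⟩)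
    have hd1 : 1 ≤ R k (a - b) := by omega
    have hdk : R k (a - b) ≤ k := by have := R_lt k (a - b); omega
    have hdab : R k (a - b) ≤ a - b := R_le k (a - b)
    refine ⟨R k (a - b), hd1, hdk, by omega, ?_⟩
    have hc : b ≤ a - R k (a - b) := by omega
    simp only [F, if_pos hc, AbsPT, AbsP]
    have hRy : R k (a - R k (a - b) - b) = 0 := by
      have : a - R k (a - b) - b = (a - b) - R k (a - b) := by omega
      rw [this]; exact R_sub_self k (a - b)
    exact Or.inr ⟨he, hRy⟩

end S16P2

namespace S16L
open S16

lemma getD_le_one {l : List ℕ} (h : ∀ x ∈ l, x ≤ 1) : l.getD 0 0 ≤ 1 := by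
  cases l with
  | nil => simp
  | cons x xs => simpa using h x (by simp)

lemma rep01 {u : List ℕ} (hu : u.Pairwise (· ≥ ·)) (h : ∀ x ∈ u, x ≤ 1) :
    ∃ c z, u = List.replicate c 1 ++ List.replicate z 0 := by
  induction u with
  | nil => exact ⟨0, 0, rfl⟩
  | cons x xs ih =>
      rw [List.pairwise_cons] at hu
      obtain ⟨c, z, hxs⟩ := ih hu.2 (fun y hy => h y (List.mem_cons_of_mem _ hy))
      have hx1 : x ≤ 1 := h x (List.mem_cons_self)
      rcases Nat.lt_or_ge x 1 with hx | hx
      · -- x = 0 : then c = 0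
        have hx0 : x = 0 := by omega
        have hc0 : c = 0 := by
          by_contra hc
          have h1 : (1 : ℕ) ∈ xs := by
            rw [hxs]
            apply List.mem_append_left
            exact List.mem_replicate.mpr ⟨hc, rfl⟩
          have := hu.1 1 h1
          omega
        refine ⟨0, z + 1, ?_⟩
        rw [hxs, hc0, hx0]
        simp [List.replicate_succ]
      · have hx1' : x = 1 := by omega
        refine ⟨c + 1, z, ?_⟩
        rw [hxs, hx1', List.replicate_succ]
        rfl

lemma getD_rep0 (z i : ℕ) : (List.replicate z (0:ℕ)).getD i 0 = 0 := by
  induction z generalizing i with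
  | zero => simp
  | succ z ih =>
      rw [List.replicate_succ]
      cases i with
      | zero => simp
      | succ i => rw [List.getD_cons_succ]; exact ih i

lemma getD_shape (c z i : ℕ) :
    (List.replicate c 1 ++ List.replicate z (0:ℕ)).getD i 0 = if i < c then 1 else 0 := by
  induction c generalizing i with
  | zero => simp [getD_rep0]
  | succ c ih =>
      rw [List.replicate_succ, List.cons_append]
      cases i with
      | zero => simp
      | succ i =>
          rw [List.getD_cons_succ, ih]
          simp [Nat.succ_lt_succ_iff]

lemma count_shape (c z : ℕ) :
    (List.replicate c 1 ++ List.replicate z (0:ℕ)).count 1 = c := by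
  simp [List.count_append, List.count_replicate]

/-- For a position with `x₃ ≤ 1`, `β(S)` is the number of ones from position 3 on. -/
lemma beta_eq_count (S : List ℕ) (hs : S.Pairwise (· ≥ ·)) (hn : 4 ≤ S.length)
    (h3 : heap S 3 ≤ 1) : beta S = (S.drop 2).count 1 := by
  match S with
  | x₁ :: x₂ :: w :: u' =>
    have hu : (w :: u').Pairwise (· ≥ ·) :=
      (List.pairwise_cons.mp ((List.pairwise_cons.mp hs).2)).2
    have hw : heap (x₁ :: x₂ :: w :: u') 3 = w := rfl
    have hw1 : w ≤ 1 := by rw [hw] at h3; exact h3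
    have hule : ∀ x ∈ w :: u', x ≤ 1 := by
      intro x hx
      rcases List.mem_cons.mp hx with rfl | hx
      · exact hw1
      · have := (List.pairwise_cons.mp hu).1 x hx
        omega
    obtain ⟨c, z, hcz⟩ := rep01 hu hule
    have hheap3 : heap (x₁ :: x₂ :: w :: u') 3 = (w :: u').getD 0 0 := rfl
    have hdrop : (x₁ :: x₂ :: w :: u').drop 2 = w :: u' := rfl
    have hcnt : (w :: u').count 1 = c := by rw [hcz]; exact count_shape c z
    rcases Nat.eq_zero_or_pos c with hc0 | hcpos
    · -- x₃ = 0
      have h30 : heap (x₁ :: x₂ :: w :: u') 3 = 0 := by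
        rw [hheap3, hcz, getD_shape]; simp [hc0]
      rw [beta, if_pos h30, hdrop, hcnt, hc0]
    · -- x₃ = 1
      have h31 : heap (x₁ :: x₂ :: w :: u') 3 = 1 := by
        rw [hheap3, hcz, getD_shape]; simp [hcpos]
      rw [beta, if_neg (by omega), hdrop, hcnt, h31]
      have hulen' : (w :: u').length = c + z := by rw [hcz]; simp
      have hlen : (x₁ :: x₂ :: w :: u').length = c + z + 2 := by
        simp only [List.length_cons] at hulen' ⊢
        omega
      have hheapj : ∀ j, 3 ≤ j → heap (x₁ :: x₂ :: w :: u') j = (w :: u').getD (j - 3) 0 := by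
        intro j hj
        have hj1 : j - 1 = (j - 3) + 2 := by omega
        simp only [heap, hj1, List.getD_cons_succ]
      have hmem : c + 2 ∈ {j : ℕ | 1 ≤ j ∧ j ≤ (x₁ :: x₂ :: w :: u').length ∧
          heap (x₁ :: x₂ :: w :: u') j = 1} := by
        refine ⟨by omega, by omega, ?_⟩
        rw [hheapj _ (by omega), hcz, getD_shape]
        simp only [if_pos (show c + 2 - 3 < c by omega)]
      have hub : ∀ j ∈ {j : ℕ | 1 ≤ j ∧ j ≤ (x₁ :: x₂ :: w :: u').length ∧
          heap (x₁ :: x₂ :: w :: u') j = 1}, j ≤ c + 2 := by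
        rintro j ⟨hj1, hj2, hj3⟩
        by_contra hj
        have hj' : c + 3 ≤ j := by omega
        rw [hheapj _ (by omega), hcz, getD_shape] at hj3
        rw [if_neg (by omega)] at hj3
        omega
      have hsup : sSup {j : ℕ | 1 ≤ j ∧ j ≤ (x₁ :: x₂ :: w :: u').length ∧
          heap (x₁ :: x₂ :: w :: u') j = 1} = c + 2 := by
        apply le_antisymm
        · exact csSup_le ⟨c + 2, hmem⟩ hub
        · exact le_csSup ⟨(x₁ :: x₂ :: w :: u').length, fun j hj => hj.2.1⟩ hmem
      rw [hsup]
      omega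

end S16L

namespace S16L
open S16

/-- Characterization of the re-sorted position after dropping the top heap to `y`. -/
lemma insert_spec (x₂ w : ℕ) (u' : List ℕ) (hs : (x₂ :: w :: u').Pairwise (· ≥ ·))
    (h1 : ∀ x ∈ w :: u', x ≤ 1) (y : ℕ) :
    ∃ p q rest, List.orderedInsert (· ≥ ·) y (x₂ :: w :: u') = p :: q :: rest ∧
      (∀ x ∈ rest, x ≤ 1) ∧
      (p, q, rest.count 1) = F x₂ ((w :: u').count 1) y := by
  have hwx2 : w ≤ x₂ := (List.pairwise_cons.mp hs).1 w (by simp)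
  have hu'w : ∀ x ∈ u', x ≤ w := (List.pairwise_cons.mp (List.pairwise_cons.mp hs).2).1
  have hw1 : w ≤ 1 := h1 w (by simp)
  by_cases hyb : x₂ ≤ y
  · have hF : F x₂ ((w :: u').count 1) y = (y, x₂, (w :: u').count 1) := by
      simp only [F]; rw [if_pos hyb]
    exact ⟨y, x₂, w :: u', by simp [List.orderedInsert, hyb], h1, by rw [hF]⟩
  · by_cases hyw : w ≤ y
    · have heq : List.orderedInsert (· ≥ ·) y (x₂ :: w :: u') = x₂ :: y :: w :: u' := by
        simp [List.orderedInsert, hyb, hyw]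
      by_cases hy1 : 1 ≤ y
      · have hF : F x₂ ((w :: u').count 1) y = (x₂, y, (w :: u').count 1) := by
          simp only [F]; rw [if_neg hyb, if_pos hy1]
        exact ⟨x₂, y, w :: u', heq, h1, by rw [hF]⟩
      · have hy0 : y = 0 := by omega
        have he0 : (w :: u').count 1 = 0 := by
          rw [List.count_eq_zero]
          intro hmem
          rcases List.mem_cons.mp hmem with h | h
          · omega
          · have := hu'w 1 h; omega
        have hF : F x₂ ((w :: u').count 1) y = (x₂, 0, 0) := by
          simp only [F]
          rw [if_neg hyb, if_neg hy1, he0, if_neg (by omega : ¬ (1:ℕ) ≤ 0)]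
        exact ⟨x₂, y, w :: u', heq, h1, by rw [hF, hy0, he0]⟩
    · -- y < w ≤ 1 : y = 0, w = 1
      have hy0 : y = 0 := by omega
      have hw1' : w = 1 := by omega
      have hx21 : 1 ≤ x₂ := by omega
      have hy1 : ¬ 1 ≤ y := by omega
      have heq : List.orderedInsert (· ≥ ·) y (x₂ :: w :: u') =
          x₂ :: w :: List.orderedInsert (· ≥ ·) y u' := by
        simp [List.orderedInsert, hyb, hyw]
      have hperm := List.perm_orderedInsert (· ≥ ·) y u'
      have hcw : (w :: u').count 1 = u'.count 1 + 1 := by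
        rw [hw1']; simp [List.count_cons]
      have he1 : 1 ≤ (w :: u').count 1 := by omega
      have hF : F x₂ ((w :: u').count 1) y = (x₂, 1, (w :: u').count 1 - 1) := by
        simp only [F]; rw [if_neg hyb, if_neg hy1, if_pos he1]
      have hc : (List.orderedInsert (· ≥ ·) y u').count 1 = u'.count 1 := by
        rw [hperm.count_eq 1, hy0]
        simp [List.count_cons]
      refine ⟨x₂, w, List.orderedInsert (· ≥ ·) y u', heq, ?_, ?_⟩
      · intro x hx
        rcases List.mem_cons.mp (hperm.mem_iff.mp hx) with rfl | hx'
        · omega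
        · have := hu'w x hx'; omega
      · rw [hF, hc, hcw, hw1']
        simp

end S16L



namespace S16M
open S16 S16L S16P2

lemma AbsP_zero {k : ℕ} (hk : 2 ≤ k) : ¬ AbsP k 0 0 0 := by
  rintro (⟨-, h⟩ | ⟨h, -⟩)
  · rcases h with ⟨h1, h2⟩ | ⟨h1, h2⟩ | ⟨h1, h2⟩ <;>
      simp only [Nat.sub_zero, R_zero] at h1 h2 <;> omega
  · exact h (by decide)

theorem key (k : ℕ) (hk : 2 ≤ k) :
    ∀ N S, S.sum ≤ N → S.Pairwise (· ≥ ·) → 4 ≤ S.length → heap S 3 ≤ 1 →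
      (MisereBP k S ↔ AbsP k (heap S 1) (heap S 2) ((S.drop 2).count 1)) := by
  intro N
  induction N with
  | zero =>
      intro S hsum hs hn h3
      have hs0 : S.sum = 0 := by omega
      have hall : ∀ x ∈ S, x = 0 := List.sum_eq_zero_iff.mp hs0
      constructor
      · intro hM
        rw [MisereBP] at hM
        exact absurd hs0 hM.1
      · intro hA
        exfalso
        match S, hA, hall with
        | x₁ :: x₂ :: u, hA, hall =>
          have h1 : x₁ = 0 := hall x₁ (by simp)
          have h2 : x₂ = 0 := hall x₂ (by simp)
          have hc : u.count 1 = 0 := by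
            rw [List.count_eq_zero]
            intro hmem
            have := hall 1 (by simp [hmem])
            omega
          have hA' : AbsP k x₁ x₂ (u.count 1) := hA
          rw [h1, h2, hc] at hA'
          exact AbsP_zero hk hA'
  | succ n ih =>
      intro S hsum hs hn h3
      match S, hsum, hs, hn, h3 with
      | x₁ :: x₂ :: w :: u', hsum, hs, hn, h3 =>
        have hps : (x₂ :: w :: u').Pairwise (· ≥ ·) := (List.pairwise_cons.mp hs).2
        have htop : ∀ v ∈ x₂ :: w :: u', v ≤ x₁ := (List.pairwise_cons.mp hs).1
        have hab : x₂ ≤ x₁ := htop x₂ (by simp)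
        have hu : (w :: u').Pairwise (· ≥ ·) := (List.pairwise_cons.mp hps).2
        have hw1 : w ≤ 1 := h3
        have h1' : ∀ x ∈ w :: u', x ≤ 1 := by
          intro x hx
          rcases List.mem_cons.mp hx with rfl | hx'
          · exact hw1
          · have := (List.pairwise_cons.mp hu).1 x hx'
            omega
        have hbe : 1 ≤ (w :: u').count 1 → 1 ≤ x₂ := by
          intro h
          have hmem : (1:ℕ) ∈ w :: u' := List.count_pos_iff.mp (by omega)
          exact (List.pairwise_cons.mp hps).1 1 hmem
        constructor
        · -- MisereBP → AbsP
          intro hM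
          by_contra hnA
          rw [MisereBP] at hM
          obtain ⟨hsum0, hmv⟩ := hM
          have ha1 : 1 ≤ x₁ := by
            by_contra h0
            apply hsum0
            apply List.sum_eq_zero_iff.mpr
            intro x hx
            rcases List.mem_cons.mp hx with rfl | hx'
            · omega
            · have := htop x hx'; omega
          have hnA' : ¬ AbsP k x₁ x₂ ((w :: u').count 1) := hnA
          obtain ⟨t, ht1, htk, hta, hPT⟩ := moveC3 hk hab ha1 hbe hnA'
          obtain ⟨p, q, rest, hEq, hrest1, htrip⟩ := insert_spec x₂ w u' hps h1' (x₁ - t)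
          have hBF : BFollower k (x₁ :: x₂ :: w :: u')
              (List.orderedInsert (· ≥ ·) (x₁ - t) (x₂ :: w :: u')) :=
            ⟨t, ht1, Nat.le_min.mpr ⟨hta, htk⟩, rfl⟩
          apply hmv _ hBF
          have hlen' : 4 ≤ (List.orderedInsert (· ≥ ·) (x₁ - t) (x₂ :: w :: u')).length := by
            rw [List.orderedInsert_length]
            simp only [List.length_cons] at hn ⊢
            omega
          have hsorted' : (List.orderedInsert (· ≥ ·) (x₁ - t) (x₂ :: w :: u')).Pairwise (· ≥ ·) :=
            List.Pairwise.orderedInsert _ _ hps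
          have h3' : heap (List.orderedInsert (· ≥ ·) (x₁ - t) (x₂ :: w :: u')) 3 ≤ 1 := by
            rw [hEq]
            exact getD_le_one hrest1
          have hsum' : (List.orderedInsert (· ≥ ·) (x₁ - t) (x₂ :: w :: u')).sum ≤ n := by
            have := BFollower.sum_lt hBF
            omega
          rw [ih _ hsum' hsorted' hlen' h3']
          rw [hEq]
          show AbsP k p q (rest.count 1)
          have : AbsPT k (p, q, rest.count 1) := by rw [htrip]; exact hPT
          exact this
        · -- AbsP → MisereBP
          intro hA
          have hA' : AbsP k x₁ x₂ ((w :: u').count 1) := hA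
          rw [MisereBP]
          constructor
          · intro h0
            have hall : ∀ x ∈ x₁ :: x₂ :: w :: u', x = 0 := List.sum_eq_zero_iff.mp h0
            have h1 : x₁ = 0 := hall x₁ (by simp)
            have h2 : x₂ = 0 := hall x₂ (by simp)
            have hc : (w :: u').count 1 = 0 := by
              rw [List.count_eq_zero]
              intro hmem
              have := hall 1 (by simp [List.mem_cons.mp hmem])
              omega
            rw [h1, h2, hc] at hA'
            exact AbsP_zero hk hA'
          · rintro S' ⟨t, ht1, htmin, rfl⟩
            have hta : t ≤ x₁ := le_trans htmin (min_le_left _ _)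
            have htk : t ≤ k := le_trans htmin (min_le_right _ _)
            have hNPT := moveC2 hk hab ht1 htk hta hbe hA'
            obtain ⟨p, q, rest, hEq, hrest1, htrip⟩ := insert_spec x₂ w u' hps h1' (x₁ - t)
            intro hM'
            have hBF : BFollower k (x₁ :: x₂ :: w :: u')
                (List.orderedInsert (· ≥ ·) (x₁ - t) (x₂ :: w :: u')) :=
              ⟨t, ht1, htmin, rfl⟩
            have hlen' : 4 ≤ (List.orderedInsert (· ≥ ·) (x₁ - t) (x₂ :: w :: u')).length := by
              rw [List.orderedInsert_length]
              simp only [List.length_cons] at hn ⊢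
              omega
            have hsorted' : (List.orderedInsert (· ≥ ·) (x₁ - t) (x₂ :: w :: u')).Pairwise (· ≥ ·) :=
              List.Pairwise.orderedInsert _ _ hps
            have h3' : heap (List.orderedInsert (· ≥ ·) (x₁ - t) (x₂ :: w :: u')) 3 ≤ 1 := by
              rw [hEq]
              exact getD_le_one hrest1
            have hsum' : (List.orderedInsert (· ≥ ·) (x₁ - t) (x₂ :: w :: u')).sum ≤ n := by
              have := BFollower.sum_lt hBF
              omega
            have hM'' := (ih _ hsum' hsorted' hlen' h3').mp hM'
            rw [hEq] at hM''
            have hM3 : AbsP k p q (rest.count 1) := hM''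
            apply hNPT
            rw [← htrip]
            exact hM3

end S16M


theorem stmt16 (k : ℕ) (hk : 2 ≤ k) (S : List ℕ) (hn : 4 ≤ S.length) (hsorted : S.Pairwise (· ≥ ·))
    (h3 : heap S 3 ≤ 1) (hb : Even (beta S))
    (hnice : KNice k (heap S 1) (heap S 2)) :
    MisereBP k S := by
  have hbc : beta S = (S.drop 2).count 1 := S16L.beta_eq_count S hsorted hn h3
  have hA : S16.AbsP k (heap S 1) (heap S 2) ((S.drop 2).count 1) :=
    Or.inl ⟨hbc ▸ hb, hnice⟩
  exact (S16M.key k hk S.sum S le_rfl hsorted hn h3).mpr hA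
end

section
/- Let k ≥ 2. If a position S = (x_1, ..., x_n) satisfies x_3 ≤ 1, β(S) is odd, and R(x_1 − x_2) = 0, then S is a P-position in misère k-Bounded Greedy Nim. -/
section Aux
open List

local notation "O" m => List.replicate m 1
local notation "Z" z => List.replicate z (0:ℕ)

lemma misere_iff (k : ℕ) (S : List ℕ) :
    MisereBP k S ↔ (S.sum ≠ 0 ∧ ∀ S', BFollower k S S' → ¬ MisereBP k S') := by
  rw [MisereBP]

lemma notP_of_P_follower {k : ℕ} {S' S'' : List ℕ} (h1 : BFollower k S' S'')
    (h2 : MisereBP k S'') : ¬ MisereBP k S' := by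
  intro hP
  rw [misere_iff] at hP
  exact hP.2 _ h1 h2

lemma ins_ge {c b : ℕ} (h : b ≤ c) (l : List ℕ) :
    List.orderedInsert (· ≥ ·) c (b :: l) = c :: b :: l := by
  simp [List.orderedInsert, h]

lemma ins_zero (m z : ℕ) :
    List.orderedInsert (· ≥ ·) 0 ((O m) ++ (Z z)) = (O m) ++ (Z (z+1)) := by
  induction m with
  | zero =>
      cases z with
      | zero => simp [List.orderedInsert]
      | succ z' => simp [List.replicate_succ, List.orderedInsert]
  | succ m' ih =>
      simp [List.replicate_succ, List.orderedInsert, ih]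

lemma ins_zero' {a : ℕ} (ha : 1 ≤ a) (m z : ℕ) :
    List.orderedInsert (· ≥ ·) 0 (a :: ((O m) ++ (Z z))) = a :: ((O m) ++ (Z (z+1))) := by
  have : ¬ (0 ≥ a) := by omega
  simp [List.orderedInsert, this, ins_zero]

lemma ins_mid {c a : ℕ} (h1 : c < a) (h2 : 1 ≤ c) (m z : ℕ) :
    List.orderedInsert (· ≥ ·) c (a :: ((O m) ++ (Z z))) = a :: c :: ((O m) ++ (Z z)) := by
  have hna : ¬ (c ≥ a) := by omega
  cases m with
  | zero =>
      cases z with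
      | zero => simp [List.orderedInsert, hna]
      | succ z' => simp [List.replicate_succ, List.orderedInsert, hna, Nat.zero_le]
  | succ m' => simp [List.replicate_succ, List.orderedInsert, hna, h2]

lemma sum_canon (a b m z : ℕ) : (a :: b :: ((O m) ++ (Z z))).sum = a + b + m := by
  simp [List.sum_append, List.sum_replicate, mul_comm]
  omega

lemma aux_one (k z : ℕ) : MisereBP k (1 :: (Z z)) := by
  rw [misere_iff]
  constructor
  · simp [List.sum_replicate]
  · rintro S' ⟨t, ht1, ht2, rfl⟩
    simp only [List.headI, List.tail] at *
    have ht : t = 1 := by omega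
    subst ht
    have : List.orderedInsert (· ≥ ·) (1 - 1) (Z z) = (Z (z+1)) := by
      have := ins_zero 0 z
      simpa using this
    rw [this, misere_iff]
    rintro ⟨hs, -⟩
    simp [List.sum_replicate] at hs

lemma main_lemma (k : ℕ) (hk : 2 ≤ k) :
    ∀ N a b m z, a + b + m ≤ N → b ≤ a → 1 ≤ b → Odd m → (k+1) ∣ (a - b) →
      MisereBP k (a :: b :: ((O m) ++ (Z z))) := by
  intro N
  induction N with
  | zero => intro a b m z h hba hb; omega
  | succ N ih =>
    intro a b m z hN hba hb hm hdvd
    have hm1 : 1 ≤ m := by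
      obtain ⟨j, hj⟩ := hm; omega
    rw [misere_iff]
    constructor
    · rw [sum_canon]; omega
    rintro S' ⟨t, ht1, ht2, rfl⟩
    simp only [List.headI, List.tail] at ht2 ⊢
    rcases eq_or_lt_of_le hba with heq | hlt
    · -- Case B : a = b
      subst heq
      rcases lt_or_eq_of_le (le_trans ht2 (min_le_left _ _)) with htlt | hteq
      · -- t < b
        have hins : List.orderedInsert (· ≥ ·) (b - t) (b :: ((O m) ++ (Z z)))
            = b :: (b - t) :: ((O m) ++ (Z z)) := ins_mid (by omega) (by omega) m z
        rw [hins]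
        refine notP_of_P_follower (S'' := (b-t) :: (b-t) :: ((O m) ++ (Z z))) ⟨t, ht1, ?_, ?_⟩ ?_
        · simpa using ht2
        · simp only [List.headI, List.tail]
          rw [ins_ge (le_refl _)]
        · exact ih (b-t) (b-t) m z (by omega) le_rfl (by omega) hm (by simp)
      · -- t = b, so b ≤ k
        have hak : b ≤ k := by omega
        have hins : List.orderedInsert (· ≥ ·) (b - t) (b :: ((O m) ++ (Z z)))
            = b :: ((O m) ++ (Z (z+1))) := by
          have : b - t = 0 := by omega
          rw [this]; exact ins_zero' (by omega) m z
        rw [hins]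
        refine notP_of_P_follower (S'' := (O m) ++ (Z (z+2))) ⟨b, by omega, ?_, ?_⟩ ?_
        · simp only [List.headI]; omega
        · simp only [List.headI, List.tail]
          have : b - b = 0 := by omega
          rw [this, ins_zero]
        · -- MisereBP of (O m ++ Z (z+2)), m odd
          obtain ⟨j, hj⟩ := hm
          cases j with
          | zero =>
              have : m = 1 := by omega
              subst this
              simpa using aux_one k (z+2)
          | succ j' =>
              have hm2 : m = (2*j'+1) + 2 := by omega
              have hO : (O m) = 1 :: 1 :: (O (2*j'+1)) := by
                rw [hm2]
                rw [show 2*j'+1+2 = (2*j'+1)+1+1 by ring]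
                simp [List.replicate_succ]
              rw [hO]
              exact ih 1 1 (2*j'+1) (z+2) (by omega) le_rfl le_rfl ⟨j', by ring⟩ (by simp)
    · -- Case A : b < a
      obtain ⟨d, hd⟩ := hdvd
      obtain ⟨d', rfl⟩ : ∃ d', d = d' + 1 := by
        refine ⟨d - 1, ?_⟩
        rcases Nat.eq_zero_or_pos d with h0 | h
        · subst h0; omega
        · omega
      have hd2 : a - b = (k+1)*d' + (k+1) := by rw [hd]; ring
      have hta : a - t ≥ b + 1 := by omega
      have hins : List.orderedInsert (· ≥ ·) (a - t) (b :: ((O m) ++ (Z z)))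
          = (a - t) :: b :: ((O m) ++ (Z z)) := ins_ge (by omega) _
      rw [hins]
      refine notP_of_P_follower (S'' := (a - (k+1)) :: b :: ((O m) ++ (Z z)))
        ⟨k+1-t, by omega, ?_, ?_⟩ ?_
      · simp only [List.headI]; omega
      · simp only [List.headI, List.tail]
        rw [show a - t - (k+1-t) = a - (k+1) by omega, ins_ge (by omega)]
      · exact ih (a-(k+1)) b m z (by omega) (by omega) hb hm ⟨d', by omega⟩

end Aux
section Aux2
open List

local notation "O" m => List.replicate m 1
local notation "Z" z => List.replicate z (0:ℕ)

lemma canon_getD (m z i : ℕ) : ((O m) ++ (Z z)).getD i 0 = if i < m then 1 else 0 := by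
  induction m generalizing i with
  | zero =>
      simp only [List.replicate_zero, List.nil_append, Nat.not_lt_zero, if_false]
      induction z generalizing i with
      | zero => simp
      | succ z' ihz =>
          cases i with
          | zero => simp [List.replicate_succ]
          | succ i' => simp [List.replicate_succ, List.getD_cons_succ, ihz]
  | succ m' ih =>
      cases i with
      | zero => simp [List.replicate_succ]
      | succ i' =>
          simp only [List.replicate_succ, List.cons_append, List.getD_cons_succ, ih]
          by_cases h : i' < m' <;> simp [h, Nat.succ_lt_succ_iff]

lemma heap_one (a b : ℕ) (L : List ℕ) : heap (a :: b :: L) 1 = a := rfl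
lemma heap_two (a b : ℕ) (L : List ℕ) : heap (a :: b :: L) 2 = b := rfl

lemma heap_ge3 (a b : ℕ) (L : List ℕ) {j : ℕ} (h : 3 ≤ j) :
    heap (a :: b :: L) j = L.getD (j - 3) 0 := by
  obtain ⟨i, rfl⟩ : ∃ i, j = i + 3 := ⟨j - 3, by omega⟩
  simp [heap, List.getD_cons_succ, show i + 3 - 1 = i + 1 + 1 by omega]

lemma beta_canon (a b m z : ℕ) (hm : 1 ≤ m) :
    beta (a :: b :: ((O m) ++ (Z z))) = m := by
  have h3 : heap (a :: b :: ((O m) ++ (Z z))) 3 = 1 := by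
    rw [heap_ge3 _ _ _ (le_refl 3), canon_getD, if_pos (show (3:ℕ) - 3 < m by omega)]
  rw [beta, h3]
  simp only [one_ne_zero, if_false]
  have hlen : (a :: b :: ((O m) ++ (Z z))).length = m + z + 2 := by
    simp
  have hmem : (m + 2) ∈ {j : ℕ | 1 ≤ j ∧ j ≤ (a :: b :: ((O m) ++ (Z z))).length ∧
      heap (a :: b :: ((O m) ++ (Z z))) j = 1} := by
    refine ⟨by omega, by rw [hlen]; omega, ?_⟩
    rw [heap_ge3 _ _ _ (by omega), canon_getD]
    rw [if_pos (show m + 2 - 3 < m by omega)]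
  have hub : ∀ j ∈ {j : ℕ | 1 ≤ j ∧ j ≤ (a :: b :: ((O m) ++ (Z z))).length ∧
      heap (a :: b :: ((O m) ++ (Z z))) j = 1}, j ≤ m + 2 := by
    rintro j ⟨hj1, hj2, hj3⟩
    by_contra hc
    push_neg at hc
    rw [heap_ge3 _ _ _ (by omega), canon_getD] at hj3
    have : ¬ (j - 3 < m) := by omega
    simp [this] at hj3
  have hsup : sSup {j : ℕ | 1 ≤ j ∧ j ≤ (a :: b :: ((O m) ++ (Z z))).length ∧
      heap (a :: b :: ((O m) ++ (Z z))) j = 1} = m + 2 := by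
    apply _root_.le_antisymm
    · exact csSup_le ⟨m + 2, hmem⟩ hub
    · exact le_csSup ⟨m + 2, hub⟩ hmem
  rw [hsup]
  omega

lemma binlist : ∀ (T : List ℕ), T.Pairwise (· ≥ ·) → (∀ x ∈ T, x ≤ 1) →
    ∃ m z, T = (O m) ++ (Z z) := by
  intro T
  induction T with
  | nil => exact fun _ _ => ⟨0, 0, rfl⟩
  | cons c T' ih =>
      intro hs hle
      rw [List.pairwise_cons] at hs
      have hc : c ≤ 1 := hle c (by simp)
      interval_cases c
      · -- c = 0 : everything is zero
        refine ⟨0, T'.length + 1, ?_⟩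
        have : ∀ x ∈ T', x = 0 := fun x hx => Nat.le_zero.1 (hs.1 x hx)
        have hT' : T' = Z T'.length := List.eq_replicate_of_mem this
        simp [List.replicate_succ]
        exact hT'
      · -- c = 1
        obtain ⟨m, z, hT'⟩ := ih hs.2 (fun x hx => hle x (by simp [hx]))
        exact ⟨m + 1, z, by simp [List.replicate_succ, hT']⟩

end Aux2

theorem stmt17' (k : ℕ) (hk : 2 ≤ k) (S : List ℕ) (hn : 4 ≤ S.length) (hsorted : S.Pairwise (· ≥ ·))
    (h3 : heap S 3 ≤ 1) (hb : Odd (beta S))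
    (hr : R k (heap S 1 - heap S 2) = 0) :
    MisereBP k S := by
  rcases S with _ | ⟨a, _ | ⟨b, _ | ⟨c, T⟩⟩⟩ <;> simp at hn
  rw [List.pairwise_cons] at hsorted
  obtain ⟨ha, hsorted⟩ := hsorted
  rw [List.pairwise_cons] at hsorted
  obtain ⟨hbge, hsorted⟩ := hsorted
  have hc1 : c ≤ 1 := by
    have : heap (a :: b :: c :: T) 3 = c := rfl
    omega
  have hall : ∀ x ∈ c :: T, x ≤ 1 := by
    rintro x hx
    rcases List.mem_cons.1 hx with rfl | hx'
    · exact hc1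
    · rw [List.pairwise_cons] at hsorted
      exact le_trans (hsorted.1 x hx') hc1
  obtain ⟨m, z, hT⟩ := binlist (c :: T) hsorted hall
  rw [hT] at hb hbge ⊢
  have hm : 1 ≤ m := by
    by_contra hm0
    push_neg at hm0
    have hm0' : m = 0 := by omega
    subst hm0'
    have : heap (a :: b :: ((List.replicate 0 1) ++ (List.replicate z (0:ℕ)))) 3 = 0 := by
      rw [heap_ge3 _ _ _ (le_refl 3), canon_getD]; simp
    rw [beta, this] at hb
    simp at hb
  have hbeta : beta (a :: b :: ((List.replicate m 1) ++ (List.replicate z (0:ℕ)))) = m :=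
    beta_canon a b m z hm
  rw [hbeta] at hb
  have hb1 : 1 ≤ b := by
    have h1mem : (1 : ℕ) ∈ (List.replicate m 1) ++ (List.replicate z (0:ℕ)) := by
      apply List.mem_append_left
      exact List.mem_replicate.2 ⟨by omega, rfl⟩
    exact hbge 1 h1mem
  have hba : b ≤ a := ha b (by simp)
  have hdvd : (k + 1) ∣ (a - b) := by
    apply Nat.dvd_of_mod_eq_zero
    simpa [R, heap_one, heap_two] using hr
  exact main_lemma k hk (a + b + m) a b m z le_rfl hba hb1 hb hdvd

theorem stmt17 (k : ℕ) (hk : 2 ≤ k) (S : List ℕ) (hn : 4 ≤ S.length) (hsorted : S.Pairwise (· ≥ ·))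
    (h3 : heap S 3 ≤ 1) (hb : Odd (beta S))
    (hr : R k (heap S 1 - heap S 2) = 0) :
    MisereBP k S := by
  exact stmt17' k hk S hn hsorted h3 hb hr
end

section
/- Let k ≥ 2. If a position S = (x_1, ..., x_n) satisfies x_3 ≥ 2, β(S) is odd, and (x_1, x_2, x_3) is k-good, then S is a P-position in misère k-Bounded Greedy Nim. -/
lemma R_lt (k x : ℕ) : R k x < k + 1 := Nat.mod_lt _ (Nat.succ_pos k)

lemma R_small {k x : ℕ} (h : x ≤ k) : R k x = x := Nat.mod_eq_of_lt (by omega)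

lemma R_le (k x : ℕ) : R k x ≤ x := Nat.mod_le _ _

/-- Master splitting lemma for modular arithmetic on differences. -/
lemma R_split {k x y : ℕ} (h : y ≤ x) :
    R k y + R k (x - y) = R k x ∨ R k y + R k (x - y) = R k x + (k + 1) := by
  have h1 : (R k y + R k (x - y)) % (k + 1) = R k x := by
    unfold R
    rw [← Nat.add_mod, Nat.add_sub_cancel' h]
  have h2 := R_lt k y
  have h3 := R_lt k (x - y)
  rcases Nat.lt_or_ge (R k y + R k (x - y)) (k + 1) with hlt | hge
  · left; rwa [Nat.mod_eq_of_lt hlt] at h1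
  · right
    rw [Nat.mod_eq_sub_mod hge, Nat.mod_eq_of_lt (by omega)] at h1
    omega

/-- sorted access monotone -/
lemma sorted_getD_mono {l : List ℕ} (hs : l.Pairwise (· ≥ ·)) {i j : ℕ}
    (hij : i ≤ j) (hj : j < l.length) : l.getD j 0 ≤ l.getD i 0 := by
  rcases Nat.eq_or_lt_of_le hij with rfl | hlt
  · exact le_refl _
  · have hi : i < l.length := lt_trans hlt hj
    have := List.Pairwise.rel_get_of_lt hs (a := ⟨i, hi⟩) (b := ⟨j, hj⟩) (by simpa using hlt)
    rw [l.getD_eq_getElem 0 hj, l.getD_eq_getElem 0 hi]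
    simpa [List.get_eq_getElem] using this

lemma sorted_countP_iff {c : ℕ} :
    ∀ (l : List ℕ), l.Pairwise (· ≥ ·) → ∀ i, i < l.length →
      (c ≤ l.getD i 0 ↔ i < l.countP (fun x => decide (c ≤ x))) := by
  intro l
  induction l with
  | nil => intro _ i hi; simp at hi
  | cons x xs ih =>
    intro hs i hi
    have hs' : xs.Pairwise (· ≥ ·) := hs.of_cons
    have hx : ∀ y ∈ xs, y ≤ x := fun y hy => List.rel_of_pairwise_cons hs hy
    rcases i with _ | i
    · simp only [List.getD_cons_zero, List.countP_cons]
      constructor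
      · intro hcx
        simp [hcx]
      · intro hpos
        by_contra hcx
        push_neg at hcx
        have h0 : xs.countP (fun x => decide (c ≤ x)) = 0 := by
          rw [List.countP_eq_zero]
          intro y hy
          simp only [decide_eq_true_eq]
          have := hx y hy; omega
        simp only [h0] at hpos
        have : ¬ (c ≤ x) := by omega
        simp [this] at hpos
    · simp only [List.getD_cons_succ, List.countP_cons]
      rw [ih hs' i (by simpa using hi)]
      by_cases hcx : c ≤ x
      · simp [hcx]
      · have h0 : xs.countP (fun x => decide (c ≤ x)) = 0 := by
          rw [List.countP_eq_zero]
          intro y hy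
          simp only [decide_eq_true_eq]
          have := hx y hy; omega
        simp [hcx, h0]

lemma heap_le_heap {S : List ℕ} (hs : S.Pairwise (· ≥ ·)) {i j : ℕ} (h1 : 1 ≤ i) (hij : i ≤ j)
    (hj : j ≤ S.length) : heap S j ≤ heap S i := by
  unfold heap
  exact sorted_getD_mono hs (show i - 1 ≤ j - 1 by omega) (show j - 1 < S.length by omega)

/-- `heap S j` with `j ≤ length` via countP iff, 1-based. -/
lemma heap_countP_iff {S : List ℕ} (hs : S.Pairwise (· ≥ ·)) {c j : ℕ} (h1 : 1 ≤ j)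
    (hj : j ≤ S.length) :
    (c ≤ heap S j ↔ j ≤ S.countP (fun x => decide (c ≤ x))) := by
  have := sorted_countP_iff (c := c) S hs (j - 1) (by omega)
  unfold heap
  rw [this]
  omega

lemma beta_eq_countP {S : List ℕ} (hs : S.Pairwise (· ≥ ·)) (hlen : 3 ≤ S.length)
    (hc : heap S 3 ≠ 0) :
    beta S = S.countP (fun x => decide (heap S 3 ≤ x)) - 2 := by
  set c := heap S 3 with hcdef
  set q := S.countP (fun x => decide (c ≤ x)) with hq
  have hq3 : 3 ≤ q := by
    rw [← heap_countP_iff hs (by omega) hlen]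
  have hqlen : q ≤ S.length := by
    rw [hq]; exact List.countP_le_length
  have hheapq : heap S q = c := by
    have h1 : c ≤ heap S q := by
      rw [heap_countP_iff hs (by omega) hqlen]
    have h2 : heap S q ≤ heap S 3 := heap_le_heap hs (by omega) (by omega) hqlen
    omega
  have hgreat : IsGreatest {j : ℕ | 1 ≤ j ∧ j ≤ S.length ∧ heap S j = c} q := by
    constructor
    · exact ⟨by omega, hqlen, hheapq⟩
    · intro j hj
      obtain ⟨hj1, hj2, hj3⟩ := hj
      rw [← heap_countP_iff hs hj1 hj2, hj3]
  rw [beta, if_neg hc, hgreat.csSup_eq]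

section Branch

variable {x1 x2 x3 x4 v : ℕ} {l : List ℕ}

lemma heap1_cons (y : ℕ) (rest : List ℕ) : heap (y :: rest) 1 = y := rfl
lemma heap2_cons (y z : ℕ) (rest : List ℕ) : heap (y :: z :: rest) 2 = z := rfl
lemma heap3_cons (y z w : ℕ) (rest : List ℕ) : heap (y :: z :: w :: rest) 3 = w := rfl

lemma oi_case1 (hv : x2 ≤ v) :
    List.orderedInsert (· ≥ ·) v (x2 :: x3 :: x4 :: l) = v :: x2 :: x3 :: x4 :: l := by
  simp [List.orderedInsert, hv]

lemma oi_case2 (hv2 : ¬ x2 ≤ v) (hv3 : x3 ≤ v) :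
    List.orderedInsert (· ≥ ·) v (x2 :: x3 :: x4 :: l) = x2 :: v :: x3 :: x4 :: l := by
  simp [List.orderedInsert, hv2, hv3]

lemma oi_case3 (hv3 : ¬ x3 ≤ v) (hv4 : x4 ≤ v) (h32 : x3 ≤ x2) :
    List.orderedInsert (· ≥ ·) v (x2 :: x3 :: x4 :: l) = x2 :: x3 :: v :: x4 :: l := by
  have h2 : ¬ x2 ≤ v := fun h => hv3 (le_trans h32 h)
  simp [List.orderedInsert, h2, hv3, hv4]

lemma oi_case4 (hv4 : ¬ x4 ≤ v) (h43 : x4 ≤ x3) (h32 : x3 ≤ x2) :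
    List.orderedInsert (· ≥ ·) v (x2 :: x3 :: x4 :: l) =
      x2 :: x3 :: x4 :: List.orderedInsert (· ≥ ·) v l := by
  have h3 : ¬ x3 ≤ v := fun h => hv4 (le_trans h43 h)
  have h2 : ¬ x2 ≤ v := fun h => hv4 (le_trans (le_trans h43 h32) h)
  simp [List.orderedInsert, h2, h3, hv4]


lemma sorted_explode (hs : (x1 :: x2 :: x3 :: x4 :: l).Pairwise (· ≥ ·)) :
    x2 ≤ x1 ∧ x3 ≤ x2 ∧ x4 ≤ x3 ∧ (∀ y ∈ l, y ≤ x4) ∧ l.Pairwise (· ≥ ·) := by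
  simp only [List.pairwise_cons, List.mem_cons] at hs
  exact ⟨hs.1 x2 (by simp), hs.2.1 x3 (by simp), hs.2.2.1 x4 (by simp), hs.2.2.2.1, hs.2.2.2.2⟩

lemma sorted_mk1 (hs : (x1 :: x2 :: x3 :: x4 :: l).Pairwise (· ≥ ·)) (hv : x2 ≤ v) :
    (v :: x2 :: x3 :: x4 :: l).Pairwise (· ≥ ·) := by
  obtain ⟨h12, h23, h34, h4l, hl⟩ := sorted_explode hs
  simp only [List.pairwise_cons, List.mem_cons] at hs ⊢
  refine ⟨?_, hs.2⟩
  rintro b (rfl | rfl | rfl | hb) <;> try omega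
  have := h4l b (by assumption); omega

lemma sorted_mk2 (hs : (x1 :: x2 :: x3 :: x4 :: l).Pairwise (· ≥ ·)) (hv2 : v ≤ x2) (hv3 : x3 ≤ v) :
    (x2 :: v :: x3 :: x4 :: l).Pairwise (· ≥ ·) := by
  obtain ⟨h12, h23, h34, h4l, hl⟩ := sorted_explode hs
  simp only [List.pairwise_cons, List.mem_cons] at hs ⊢
  refine ⟨?_, ?_, hs.2.2⟩
  · rintro b (rfl | rfl | rfl | hb) <;> try omega
    have := h4l b (by assumption); omega
  · rintro b (rfl | rfl | hb) <;> try omega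
    have := h4l b (by assumption); omega

lemma sorted_mk3 (hs : (x1 :: x2 :: x3 :: x4 :: l).Pairwise (· ≥ ·)) (hv3 : v ≤ x3) (hv4 : x4 ≤ v) :
    (x2 :: x3 :: v :: x4 :: l).Pairwise (· ≥ ·) := by
  obtain ⟨h12, h23, h34, h4l, hl⟩ := sorted_explode hs
  simp only [List.pairwise_cons, List.mem_cons] at hs ⊢
  refine ⟨?_, ?_, ?_, hs.2.2.2⟩
  · rintro b (rfl | rfl | rfl | hb) <;> try omega
    have := h4l b (by assumption); omega
  · rintro b (rfl | rfl | hb) <;> try omega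
    have := h4l b (by assumption); omega
  · rintro b (rfl | hb) <;> try omega
    have := h4l b (by assumption); omega

lemma sorted_mk4 (hs : (x1 :: x2 :: x3 :: x4 :: l).Pairwise (· ≥ ·)) (hv4 : v ≤ x4) :
    (x2 :: x3 :: x4 :: List.orderedInsert (· ≥ ·) v l).Pairwise (· ≥ ·) := by
  obtain ⟨h12, h23, h34, h4l, hl⟩ := sorted_explode hs
  have hins : (List.orderedInsert (· ≥ ·) v l).Pairwise (· ≥ ·) := hl.orderedInsert v l
  have hmem : ∀ y ∈ List.orderedInsert (· ≥ ·) v l, y ≤ x4 := by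
    intro y hy
    rw [List.mem_orderedInsert] at hy
    rcases hy with rfl | hy
    · exact hv4
    · exact h4l y hy
  simp only [List.pairwise_cons, List.mem_cons]
  refine ⟨?_, ?_, ?_, hins⟩
  · rintro b (rfl | rfl | hb)
    · omega
    · omega
    · have := hmem b hb; omega
  · rintro b (rfl | hb)
    · omega
    · have := hmem b hb; omega
  · exact hmem


lemma beta_case1 (hs : (x1 :: x2 :: x3 :: x4 :: l).Pairwise (· ≥ ·)) (hv : x2 ≤ v) :
    beta (v :: x2 :: x3 :: x4 :: l) = beta (x1 :: x2 :: x3 :: x4 :: l) := by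
  obtain ⟨h12, h23, h34, h4l, hl⟩ := sorted_explode hs
  by_cases h0 : x3 = 0
  · rw [beta, beta]
    simp [heap3_cons, h0]
  · rw [beta_eq_countP (sorted_mk1 hs hv) (by simp) (by simpa [heap3_cons] using h0),
        beta_eq_countP hs (by simp) (by simpa [heap3_cons] using h0)]
    rw [heap3_cons, heap3_cons]
    have hv3 : x3 ≤ v := le_trans h23 hv
    have h13 : x3 ≤ x1 := le_trans h23 h12
    simp [List.countP_cons, hv3, h13, h23]
    all_goals omega

lemma beta_case2 (hs : (x1 :: x2 :: x3 :: x4 :: l).Pairwise (· ≥ ·)) (hv2 : v ≤ x2) (hv3 : x3 ≤ v) :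
    beta (x2 :: v :: x3 :: x4 :: l) = beta (x1 :: x2 :: x3 :: x4 :: l) := by
  obtain ⟨h12, h23, h34, h4l, hl⟩ := sorted_explode hs
  by_cases h0 : x3 = 0
  · rw [beta, beta]
    simp [heap3_cons, h0]
  · rw [beta_eq_countP (sorted_mk2 hs hv2 hv3) (by simp) (by simpa [heap3_cons] using h0),
        beta_eq_countP hs (by simp) (by simpa [heap3_cons] using h0)]
    rw [heap3_cons, heap3_cons]
    have h13 : x3 ≤ x1 := le_trans h23 h12
    simp [List.countP_cons, hv3, h13, h23]
    all_goals omega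

lemma beta_case3 (hs : (x1 :: x2 :: x3 :: x4 :: l).Pairwise (· ≥ ·)) (hv3 : v ≤ x3) (hv4 : x4 ≤ v)
    (hv0 : v ≠ 0) :
    beta (x2 :: x3 :: v :: x4 :: l) =
      (x1 :: x2 :: x3 :: x4 :: l).countP (fun x => decide (v ≤ x)) - 2 := by
  obtain ⟨h12, h23, h34, h4l, hl⟩ := sorted_explode hs
  rw [beta_eq_countP (sorted_mk3 hs hv3 hv4) (by simp) (by simpa [heap3_cons] using hv0)]
  rw [heap3_cons]
  have hv2 : v ≤ x2 := le_trans hv3 h23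
  have hv1 : v ≤ x1 := le_trans hv2 h12
  simp [List.countP_cons, hv1, hv2, hv3]
  all_goals omega

lemma beta_case4 (hs : (x1 :: x2 :: x3 :: x4 :: l).Pairwise (· ≥ ·)) (hv4 : v < x4) :
    beta (x2 :: x3 :: x4 :: List.orderedInsert (· ≥ ·) v l) =
      (x1 :: x2 :: x3 :: x4 :: l).countP (fun x => decide (x4 ≤ x)) - 3 := by
  obtain ⟨h12, h23, h34, h4l, hl⟩ := sorted_explode hs
  have h0 : x4 ≠ 0 := by omega
  have hlen : 3 ≤ (x2 :: x3 :: x4 :: List.orderedInsert (· ≥ ·) v l).length := by simp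
  rw [beta_eq_countP (sorted_mk4 hs (by omega)) hlen (by simpa [heap3_cons] using h0)]
  rw [heap3_cons]
  have hcnt : (List.orderedInsert (· ≥ ·) v l).countP (fun x => decide (x4 ≤ x)) =
      (v :: l).countP (fun x => decide (x4 ≤ x)) :=
    (List.perm_orderedInsert _ v l).countP_eq _
  have h42 : x4 ≤ x2 := le_trans h34 h23
  have h41 : x4 ≤ x1 := le_trans h42 h12
  have hnv : ¬ x4 ≤ v := by omega
  simp only [ge_iff_le] at hcnt; simp [List.countP_cons, hcnt, h41, h42, h34, hnv]
  all_goals omega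

end Branch

/-- Abstract arithmetic form of the misère P-condition. -/
def CondA (k a b c bt : ℕ) : Prop :=
  (c ≤ 1 ∧ bt % 2 = 0 ∧ KNice k a b) ∨
  (c ≤ 1 ∧ bt % 2 = 1 ∧ R k (a - b) = 0) ∨
  (2 ≤ c ∧ bt % 2 = 0 ∧ R k (a - b) = 0) ∨
  (2 ≤ c ∧ bt % 2 = 1 ∧ KGood k a b c)

lemma cond_unfold (k x1 x2 x3 : ℕ) (l : List ℕ) :
    MiserePCond k (x1 :: x2 :: x3 :: l) ↔
      CondA k x1 x2 x3 (beta (x1 :: x2 :: x3 :: l)) := by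
  unfold MiserePCond CondA
  rw [Nat.even_iff, Nat.odd_iff]
  rfl

/-- basic toolkit addition -/
lemma R_zero_cases {k x : ℕ} (h : R k x = 0) : x = 0 ∨ k + 1 ≤ x := by
  rcases Nat.eq_zero_or_pos x with rfl | hx
  · exact Or.inl rfl
  · right
    by_contra hlt
    push_neg at hlt
    rw [R_small (by omega)] at h
    omega

/-- Arithmetic kernel, branch 1 : `v = x1 - t ≥ x2`. -/
lemma AK1 {k x1 x2 x3 t bt : ℕ} (hk : 2 ≤ k) (h23 : x3 ≤ x2)
    (ht1 : 1 ≤ t) (htk : t ≤ k) (hv2 : x2 ≤ x1 - t) (htx : t ≤ x1)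
    (hc : CondA k x1 x2 x3 bt) (hc' : CondA k (x1 - t) x2 x3 bt) : False := by
  unfold CondA KGood KNice at hc hc'
  rw [show x1 - t - x2 = x1 - x2 - t by omega] at hc'
  have e1 : R k t + R k (x1 - x2 - t) = R k (x1 - x2) ∨
      R k t + R k (x1 - x2 - t) = R k (x1 - x2) + (k+1) := R_split (by omega)
  have e2 : R k t + R k (x1 - t) = R k x1 ∨
      R k t + R k (x1 - t) = R k x1 + (k+1) := R_split (by omega)
  have e3 : R k x2 + R k (x1 - x2) = R k x1 ∨
      R k x2 + R k (x1 - x2) = R k x1 + (k+1) := R_split (by omega)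
  have e4 : R k x2 + R k (x1 - x2 - t) = R k (x1 - t) ∨
      R k x2 + R k (x1 - x2 - t) = R k (x1 - t) + (k+1) := by
    have := R_split (k := k) (x := x1 - t) (y := x2) (by omega)
    rwa [show x1 - t - x2 = x1 - x2 - t by omega] at this
  have et : R k t = t := R_small htk
  have b1 := R_lt k (x1 - x2)
  have b2 := R_lt k (x1 - x2 - t)
  have b3 := R_lt k x1
  have b4 := R_lt k x2
  have b5 := R_lt k (x1 - t)
  have b6 := R_lt k (x2 - x3)
  omega

/-- Arithmetic kernel, branch 2 : `x3 ≤ v = x1 - t < x2`. -/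
lemma AK2 {k x1 x2 x3 t bt : ℕ} (hk : 2 ≤ k) (h12 : x2 ≤ x1) (h23 : x3 ≤ x2)
    (ht1 : 1 ≤ t) (htk : t ≤ k) (htx : t ≤ x1)
    (hv2 : x1 - t < x2) (hv3 : x3 ≤ x1 - t)
    (hc : CondA k x1 x2 x3 bt) (hc' : CondA k x2 (x1 - t) x3 bt) : False := by
  unfold CondA KGood KNice at hc hc'
  rw [show x2 - (x1 - t) = t - (x1 - x2) by omega,
      show x1 - t - x3 = x1 - x3 - t by omega] at hc'
  have sX : R k (x1 - x2) = x1 - x2 := R_small (by omega)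
  have sC : R k (t - (x1 - x2)) = t - (x1 - x2) := R_small (by omega)
  have et : R k t = t := R_small htk
  have f2 : R k t + R k (x1 - x3 - t) = R k (x1 - x3) ∨
      R k t + R k (x1 - x3 - t) = R k (x1 - x3) + (k+1) := R_split (by omega)
  have f3 : R k (x2 - x3) + R k (x1 - x2) = R k (x1 - x3) ∨
      R k (x2 - x3) + R k (x1 - x2) = R k (x1 - x3) + (k+1) := by
    have := R_split (k := k) (x := x1 - x3) (y := x2 - x3) (by omega)
    rwa [show x1 - x3 - (x2 - x3) = x1 - x2 by omega] at this
  have f4 : R k x2 + R k (x1 - x2) = R k x1 ∨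
      R k x2 + R k (x1 - x2) = R k x1 + (k+1) := R_split h12
  have f5 : R k t + R k (x1 - t) = R k x1 ∨
      R k t + R k (x1 - t) = R k x1 + (k+1) := R_split htx
  have b1 := R_lt k x1
  have b2 := R_lt k x2
  have b3 := R_lt k (x1 - t)
  have b4 := R_lt k (x1 - x3 - t)
  have b5 := R_lt k (x1 - x3)
  have b6 := R_lt k (x2 - x3)
  omega

/-- Arithmetic kernel, branch 3 : `x4 ≤ v = x1 - t < x3`. -/
lemma AK3 {k x1 x2 x3 x4 t bt bt' m : ℕ} (hk : 2 ≤ k)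
    (h12 : x2 ≤ x1) (h23 : x3 ≤ x2) (h34 : x4 ≤ x3)
    (ht1 : 1 ≤ t) (htk : t ≤ k) (htx : t ≤ x1)
    (hv3 : x1 - t < x3) (hv4 : x4 ≤ x1 - t)
    (hbt : bt = m - 2) (hm3 : 3 ≤ m) (hm4 : 4 ≤ m ↔ x3 ≤ x4)
    (hb'0 : x1 - t = 0 → bt' % 2 = 0)
    (hc : CondA k x1 x2 x3 bt) (hc' : CondA k x2 x3 (x1 - t) bt') : False := by
  unfold CondA KGood KNice at hc hc'
  rw [show x3 - (x1 - t) = t - (x1 - x3) by omega] at hc'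
  have sA : R k (x1 - x2) = x1 - x2 := R_small (by omega)
  have sB : R k (x2 - x3) = x2 - x3 := R_small (by omega)
  have sC : R k (t - (x1 - x3)) = t - (x1 - x3) := R_small (by omega)
  have f1 : R k x3 + R k (x2 - x3) = R k x2 ∨
      R k x3 + R k (x2 - x3) = R k x2 + (k+1) := R_split h23
  have f2 : R k x2 + R k (x1 - x2) = R k x1 ∨
      R k x2 + R k (x1 - x2) = R k x1 + (k+1) := R_split h12
  have z3 : R k x3 = 0 → x3 = 0 ∨ k + 1 ≤ x3 := fun h => R_zero_cases h
  have c1 : x1 ≤ k → R k x1 = x1 := fun h => R_small h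
  have c2 : x2 ≤ k → R k x2 = x2 := fun h => R_small h
  have c3 : x3 ≤ k → R k x3 = x3 := fun h => R_small h
  have b1 := R_lt k x1
  have b2 := R_lt k x2
  have b3 := R_lt k x3
  rcases hc with ⟨u1, u2, u3⟩ | ⟨u1, u2, u3⟩ | ⟨u1, u2, u3⟩ | ⟨u1, u2, u3⟩ <;>
    rcases hc' with ⟨w1, w2, w3⟩ | ⟨w1, w2, w3⟩ | ⟨w1, w2, w3⟩ | ⟨w1, w2, w3⟩ <;>
    omega

/-- Arithmetic kernel, branch 4 : `v = x1 - t < x4`. -/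
lemma AK4 {k x1 x2 x3 x4 t bt bt' m m4 : ℕ} (hk : 2 ≤ k)
    (h12 : x2 ≤ x1) (h23 : x3 ≤ x2) (h34 : x4 ≤ x3)
    (ht1 : 1 ≤ t) (htk : t ≤ k) (htx : t ≤ x1)
    (hv4 : x1 - t < x4) (h4 : 1 ≤ x4)
    (hbt : bt = m - 2) (hm3 : 3 ≤ m) (hm4 : 4 ≤ m ↔ x3 ≤ x4)
    (hbt' : bt' = m4 - 3) (hm4eq : x4 = x3 → m4 = m)
    (hc : CondA k x1 x2 x3 bt) (hc' : CondA k x2 x3 x4 bt') : False := by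
  unfold CondA KGood KNice at hc hc'
  have sA : R k (x1 - x2) = x1 - x2 := R_small (by omega)
  have sB : R k (x2 - x3) = x2 - x3 := R_small (by omega)
  have sD : R k (x3 - x4) = x3 - x4 := R_small (by omega)
  have f1 : R k x3 + R k (x2 - x3) = R k x2 ∨
      R k x3 + R k (x2 - x3) = R k x2 + (k+1) := R_split h23
  have f2 : R k x2 + R k (x1 - x2) = R k x1 ∨
      R k x2 + R k (x1 - x2) = R k x1 + (k+1) := R_split h12
  have z3 : R k x3 = 0 → x3 = 0 ∨ k + 1 ≤ x3 := fun h => R_zero_cases h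
  have c1 : x1 ≤ k → R k x1 = x1 := fun h => R_small h
  have c2 : x2 ≤ k → R k x2 = x2 := fun h => R_small h
  have c3 : x3 ≤ k → R k x3 = x3 := fun h => R_small h
  have b1 := R_lt k x1
  have b2 := R_lt k x2
  have b3 := R_lt k x3
  rcases hc with ⟨u1, u2, u3⟩ | ⟨u1, u2, u3⟩ | ⟨u1, u2, u3⟩ | ⟨u1, u2, u3⟩ <;>
    rcases hc' with ⟨w1, w2, w3⟩ | ⟨w1, w2, w3⟩ | ⟨w1, w2, w3⟩ | ⟨w1, w2, w3⟩ <;>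
    omega

lemma heap4_cons (y z w u : ℕ) (rest : List ℕ) : heap (y :: z :: w :: u :: rest) 4 = u := rfl

lemma lemA {k x1 x2 x3 x4 t : ℕ} {l : List ℕ} (hk : 2 ≤ k)
    (hs : (x1 :: x2 :: x3 :: x4 :: l).Pairwise (· ≥ ·))
    (ht1 : 1 ≤ t) (htk : t ≤ k) (htx : t ≤ x1)
    (hc : MiserePCond k (x1 :: x2 :: x3 :: x4 :: l)) :
    ¬ MiserePCond k (List.orderedInsert (· ≥ ·) (x1 - t) (x2 :: x3 :: x4 :: l)) := by
  obtain ⟨h12, h23, h34, h4l, hl⟩ := sorted_explode hs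
  intro hc'
  rw [cond_unfold] at hc
  by_cases hv2 : x2 ≤ x1 - t
  · rw [oi_case1 hv2, cond_unfold, beta_case1 hs hv2] at hc'
    exact AK1 hk h23 ht1 htk hv2 htx hc hc'
  · by_cases hv3 : x3 ≤ x1 - t
    · rw [oi_case2 hv2 hv3, cond_unfold, beta_case2 hs (by omega) hv3] at hc'
      exact AK2 hk h12 h23 ht1 htk htx (by omega) hv3 hc hc'
    · have hx3 : 1 ≤ x3 := by omega
      have hβ : beta (x1 :: x2 :: x3 :: x4 :: l) =
          (x1 :: x2 :: x3 :: x4 :: l).countP (fun x => decide (x3 ≤ x)) - 2 := by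
        have := beta_eq_countP hs (by simp) (by simp only [heap3_cons]; omega)
        rw [heap3_cons] at this; exact this
      have hm3 : 3 ≤ (x1 :: x2 :: x3 :: x4 :: l).countP (fun x => decide (x3 ≤ x)) := by
        have h := (heap_countP_iff (c := x3) (j := 3) hs (by omega) (by simp)).mp
        simp only [heap3_cons] at h
        exact h le_rfl
      have hm4 : 4 ≤ (x1 :: x2 :: x3 :: x4 :: l).countP (fun x => decide (x3 ≤ x)) ↔
          x3 ≤ x4 := by
        have h := heap_countP_iff (c := x3) (j := 4) hs (by omega) (by simp)
        simp only [heap4_cons] at h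
        exact h.symm
      by_cases hv4 : x4 ≤ x1 - t
      · rw [oi_case3 (by omega) hv4 h23, cond_unfold] at hc'
        refine AK3 hk h12 h23 h34 ht1 htk htx (by omega) hv4 hβ hm3 hm4 ?_ hc hc'
        intro h0
        rw [beta, heap3_cons, if_pos h0]
      · rw [oi_case4 (by omega) h34 h23, cond_unfold,
            beta_case4 hs (by omega)] at hc'
        refine AK4 hk h12 h23 h34 ht1 htk htx (by omega) (by omega) hβ hm3 hm4 rfl ?_ hc hc'
        intro h
        rw [h]

lemma R_ge_add (k x : ℕ) : x = R k x ∨ R k x + (k + 1) ≤ x := by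
  have h := Nat.mod_add_div x (k + 1)
  rcases Nat.eq_zero_or_pos (x / (k + 1)) with h0 | h0
  · left; rw [h0, Nat.mul_zero] at h; unfold R; omega
  · right
    have : k + 1 ≤ (k + 1) * (x / (k + 1)) := Nat.le_mul_of_pos_right _ h0
    unfold R; omega

lemma R_zero (k : ℕ) : R k 0 = 0 := Nat.zero_mod _

lemma lemB {k x1 x2 x3 x4 : ℕ} {l : List ℕ} (hk : 2 ≤ k)
    (hs : (x1 :: x2 :: x3 :: x4 :: l).Pairwise (· ≥ ·)) (hx1 : 1 ≤ x1)
    (hnc : ¬ MiserePCond k (x1 :: x2 :: x3 :: x4 :: l)) :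
    ∃ t, (1 ≤ t ∧ t ≤ k ∧ t ≤ x1) ∧
      MiserePCond k (List.orderedInsert (· ≥ ·) (x1 - t) (x2 :: x3 :: x4 :: l)) := by
  obtain ⟨h12, h23, h34, h4l, hl⟩ := sorted_explode hs
  rw [cond_unfold] at hnc
  have bp := R_lt k (x1 - x2)
  have bq := R_lt k (x2 - x3)
  have lp := R_le k (x1 - x2)
  have lq := R_le k (x2 - x3)
  have bA := R_lt k x1
  have bB := R_lt k x2
  rcases Nat.lt_or_ge x3 2 with h3le | h3ge
  · -- ================= x3 ≤ 1 =================
    by_cases hpar : beta (x1 :: x2 :: x3 :: x4 :: l) % 2 = 1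
    · -- beta odd : t = p, branch 1, new C2
      have hp : R k (x1 - x2) ≠ 0 := by
        intro h0
        exact hnc (Or.inr (Or.inl ⟨by omega, hpar, h0⟩))
      refine ⟨R k (x1 - x2), ⟨by omega, by omega, by omega⟩, ?_⟩
      rw [oi_case1 (by omega), cond_unfold, beta_case1 hs (by omega)]
      refine Or.inr (Or.inl ⟨by omega, hpar, ?_⟩)
      rw [show x1 - R k (x1 - x2) - x2 = x1 - x2 - R k (x1 - x2) by omega]
      have f := R_split (k := k) (x := x1 - x2) (y := R k (x1 - x2)) (by omega)
      have hRR : R k (R k (x1 - x2)) = R k (x1 - x2) := R_small (by omega)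
      have b := R_lt k (x1 - x2 - R k (x1 - x2))
      omega
    · -- beta even
      have hpar0 : beta (x1 :: x2 :: x3 :: x4 :: l) % 2 = 0 := by omega
      have hnn : ¬ KNice k x1 x2 := fun h =>
        hnc (Or.inl ⟨by omega, hpar0, h⟩)
      have fAB : R k x2 + R k (x1 - x2) = R k x1 ∨
          R k x2 + R k (x1 - x2) = R k x1 + (k + 1) := R_split h12
      by_cases hB2 : 2 ≤ R k x2
      · have hp : R k (x1 - x2) ≠ 0 := by
          intro h0
          exact hnn (Or.inr (Or.inl ⟨h0, hB2⟩))
        refine ⟨R k (x1 - x2), ⟨by omega, by omega, by omega⟩, ?_⟩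
        rw [oi_case1 (by omega), cond_unfold, beta_case1 hs (by omega)]
        refine Or.inl ⟨by omega, hpar0, Or.inr (Or.inl ⟨?_, hB2⟩)⟩
        rw [show x1 - R k (x1 - x2) - x2 = x1 - x2 - R k (x1 - x2) by omega]
        have f := R_split (k := k) (x := x1 - x2) (y := R k (x1 - x2)) (by omega)
        have hRR : R k (R k (x1 - x2)) = R k (x1 - x2) := R_small (by omega)
        have b := R_lt k (x1 - x2 - R k (x1 - x2))
        omega
      · by_cases hB0 : R k x2 = 0
        · by_cases hA0 : R k x1 = 0
          · have hp0 : R k (x1 - x2) = 0 := by omega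
            by_cases hbig : k ≤ x1 - x2
            · have hge : k + 1 ≤ x1 - x2 := by
                have h := R_ge_add k (x1 - x2); omega
              refine ⟨k, ⟨by omega, le_rfl, by omega⟩, ?_⟩
              rw [oi_case1 (by omega), cond_unfold, beta_case1 hs (by omega)]
              refine Or.inl ⟨by omega, hpar0, Or.inr (Or.inr ⟨?_, hB0⟩)⟩
              have f := R_split (k := k) (x := x1) (y := k) (by omega)
              have hRk : R k k = k := R_small le_rfl
              have b := R_lt k (x1 - k)
              omega
            · have hx2r : k + 1 ≤ x2 := by
                have h := R_zero_cases hB0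
                have h2 := R_zero_cases hA0
                omega
              have hx12 : x1 = x2 := by
                have h := R_ge_add k (x1 - x2); omega
              refine ⟨k, ⟨by omega, le_rfl, by omega⟩, ?_⟩
              rw [oi_case2 (by omega) (by omega), cond_unfold,
                  beta_case2 hs (by omega) (by omega)]
              refine Or.inl ⟨by omega, hpar0, Or.inl ⟨hB0, ?_⟩⟩
              rw [show x1 - k = x2 - k by omega]
              have f := R_split (k := k) (x := x2) (y := k) (by omega)
              have hRk : R k k = k := R_small le_rfl
              have b := R_lt k (x2 - k)
              omega
          · -- R k x1 ≥ 2 (R k x1 = 1 impossible by N3)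
            have hA1 : R k x1 ≠ 1 := fun h => hnn (Or.inr (Or.inr ⟨h, hB0⟩))
            have hA2 : 2 ≤ R k x1 := by omega
            have hpA : R k (x1 - x2) = R k x1 := by omega
            refine ⟨R k x1 - 1, ⟨by omega, by omega, by omega⟩, ?_⟩
            rw [oi_case1 (by omega), cond_unfold, beta_case1 hs (by omega)]
            refine Or.inl ⟨by omega, hpar0, Or.inr (Or.inr ⟨?_, hB0⟩)⟩
            have f := R_split (k := k) (x := x1) (y := R k x1 - 1) (by omega)
            have hRR : R k (R k x1 - 1) = R k x1 - 1 := R_small (by omega)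
            have b := R_lt k (x1 - (R k x1 - 1))
            omega
        · -- R k x2 = 1
          have hB1 : R k x2 = 1 := by omega
          have hA : R k x1 ≠ 0 := by
            intro h0
            exact hnn (Or.inl ⟨h0, hB1⟩)
          by_cases hbig : R k x1 ≤ x1 - x2
          · refine ⟨R k x1, ⟨by omega, by omega, by omega⟩, ?_⟩
            rw [oi_case1 (by omega), cond_unfold, beta_case1 hs (by omega)]
            refine Or.inl ⟨by omega, hpar0, Or.inl ⟨?_, hB1⟩⟩
            have f := R_split (k := k) (x := x1) (y := R k x1) (by omega)
            have hRR : R k (R k x1) = R k x1 := R_small (by omega)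
            have b := R_lt k (x1 - R k x1)
            omega
          · have hx2pos : 1 ≤ x2 := by
              rcases Nat.eq_zero_or_pos x2 with rfl | h
              · rw [R_zero] at hB1; omega
              · exact h
            have hpA : R k (x1 - x2) + 1 = R k x1 := by omega
            have hval : x1 - x2 + 1 = R k x1 := by omega
            by_cases hv3' : x3 ≤ x2 - 1
            · refine ⟨R k x1, ⟨by omega, by omega, by omega⟩, ?_⟩
              rw [oi_case2 (by omega) (by omega), cond_unfold,
                  beta_case2 hs (by omega) (by omega)]
              refine Or.inl ⟨by omega, hpar0, Or.inr (Or.inr ⟨hB1, ?_⟩)⟩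
              rw [show x1 - R k x1 = x2 - 1 by omega]
              have f := R_split (k := k) (x := x2) (y := 1) (by omega)
              have hR1 : R k 1 = 1 := R_small (by omega)
              have b := R_lt k (x2 - 1)
              omega
            · -- x2 = x3 = 1, x1 = R k x1 ≤ k ; t = x1, branch 4
              have hx2e : x2 = 1 := by omega
              have hx3e : x3 = 1 := by omega
              have hβ : beta (x1 :: x2 :: x3 :: x4 :: l) = (x1 :: x2 :: x3 :: x4 :: l).countP (fun x => decide (x3 ≤ x)) - 2 := by
                have := beta_eq_countP hs (by simp) (by simp only [heap3_cons]; omega)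
                rw [heap3_cons] at this; exact this
              have hm3 : 3 ≤ (x1 :: x2 :: x3 :: x4 :: l).countP (fun x => decide (x3 ≤ x)) := by
                have h := (heap_countP_iff (c := x3) (j := 3) hs (by omega) (by simp)).mp
                simp only [heap3_cons] at h
                exact h le_rfl
              have hm4 : 4 ≤ (x1 :: x2 :: x3 :: x4 :: l).countP (fun x => decide (x3 ≤ x)) ↔ x3 ≤ x4 := by
                have h := heap_countP_iff (c := x3) (j := 4) hs (by omega) (by simp)
                simp only [heap4_cons] at h
                exact h.symm
              have hx4 : x4 = 1 := by
                have h4 : 4 ≤ (x1 :: x2 :: x3 :: x4 :: l).countP (fun x => decide (x3 ≤ x)) := by omega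
                have := hm4.mp h4
                omega
              refine ⟨x1, ⟨by omega, by omega, le_rfl⟩, ?_⟩
              rw [oi_case4 (by omega) h34 h23, cond_unfold, beta_case4 hs (by omega)]
              refine Or.inr (Or.inl ⟨by omega, ?_, ?_⟩)
              · have he : (fun x : ℕ => decide (x4 ≤ x)) = (fun x => decide (x3 ≤ x)) := by
                  simp only [hx4, hx3e]
                rw [he]
                omega
              · rw [show x2 - x3 = 0 by omega, R_zero]
  · -- ================= x3 ≥ 2 =================
    have hβ : beta (x1 :: x2 :: x3 :: x4 :: l) = (x1 :: x2 :: x3 :: x4 :: l).countP (fun x => decide (x3 ≤ x)) - 2 := by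
      have := beta_eq_countP hs (by simp) (by simp only [heap3_cons]; omega)
      rw [heap3_cons] at this; exact this
    have hm3 : 3 ≤ (x1 :: x2 :: x3 :: x4 :: l).countP (fun x => decide (x3 ≤ x)) := by
      have h := (heap_countP_iff (c := x3) (j := 3) hs (by omega) (by simp)).mp
      simp only [heap3_cons] at h
      exact h le_rfl
    have hm4 : 4 ≤ (x1 :: x2 :: x3 :: x4 :: l).countP (fun x => decide (x3 ≤ x)) ↔ x3 ≤ x4 := by
      have h := heap_countP_iff (c := x3) (j := 4) hs (by omega) (by simp)
      simp only [heap4_cons] at h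
      exact h.symm
    by_cases hpar : beta (x1 :: x2 :: x3 :: x4 :: l) % 2 = 1
    · -- beta odd, ¬C4 gives ¬KGood
      have hng : ¬ KGood k x1 x2 x3 := fun h =>
        hnc (Or.inr (Or.inr (Or.inr ⟨h3ge, hpar, h⟩)))
      by_cases hq0 : R k (x2 - x3) = 0
      · -- q = 0 ; p ≠ k
        have hpk : R k (x1 - x2) ≠ k := fun h =>
          hng (Or.inl ⟨h, hq0⟩)
        by_cases hbig : x2 + R k (x1 - x2) < x1
        · -- x1 - x2 ≥ p + k + 1 ; t = p+1, branch 1, new G1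
          have hge : R k (x1 - x2) + (k + 1) ≤ x1 - x2 := by
            have h := R_ge_add k (x1 - x2); omega
          refine ⟨R k (x1 - x2) + 1, ⟨by omega, by omega, by omega⟩, ?_⟩
          rw [oi_case1 (by omega), cond_unfold, beta_case1 hs (by omega)]
          refine Or.inr (Or.inr (Or.inr ⟨h3ge, hpar, Or.inl ⟨?_, hq0⟩⟩))
          rw [show x1 - (R k (x1 - x2) + 1) - x2 = x1 - x2 - (R k (x1 - x2) + 1) by omega]
          have f := R_split (k := k) (x := x1 - x2) (y := R k (x1 - x2) + 1) (by omega)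
          have hRR : R k (R k (x1 - x2) + 1) = R k (x1 - x2) + 1 := R_small (by omega)
          have b := R_lt k (x1 - x2 - (R k (x1 - x2) + 1))
          omega
        · -- x1 - x2 = p
          have hval : x1 - x2 = R k (x1 - x2) := by omega
          by_cases hq' : x3 < x2
          · -- x2 - x3 ≥ k+1 ; t = p+1, branch 2, new G3
            have hge : k + 1 ≤ x2 - x3 := by
              have h := R_ge_add k (x2 - x3); omega
            refine ⟨R k (x1 - x2) + 1, ⟨by omega, by omega, by omega⟩, ?_⟩
            rw [oi_case2 (by omega) (by omega), cond_unfold,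
                beta_case2 hs (by omega) (by omega)]
            refine Or.inr (Or.inr (Or.inr ⟨h3ge, hpar, Or.inr (Or.inr ⟨?_, ?_⟩)⟩))
            · rw [show x2 - (x1 - (R k (x1 - x2) + 1)) = 1 by omega]
              exact R_small (by omega)
            · rw [show x1 - (R k (x1 - x2) + 1) - x3 = x2 - x3 - 1 by omega]
              have f := R_split (k := k) (x := x2 - x3) (y := 1) (by omega)
              have hR1 : R k 1 = 1 := R_small (by omega)
              have b := R_lt k (x2 - x3 - 1)
              omega
          · -- x2 = x3 ; t = p+1, v = x3 - 1
            have hx23 : x2 = x3 := by omega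
            by_cases hd : x3 ≤ x4
            · -- x4 = x3 : branch 4, new C3
              have hx43 : x4 = x3 := by omega
              refine ⟨R k (x1 - x2) + 1, ⟨by omega, by omega, by omega⟩, ?_⟩
              rw [oi_case4 (by omega) h34 h23, cond_unfold, beta_case4 hs (by omega)]
              refine Or.inr (Or.inr (Or.inl ⟨by omega, ?_, ?_⟩))
              · have he : (fun x : ℕ => decide (x4 ≤ x)) = (fun x => decide (x3 ≤ x)) := by
                  simp only [hx43]
                rw [he]
                omega
              · rw [show x2 - x3 = 0 by omega, R_zero]
            · -- x4 < x3 : branch 3, v = x3 - 1 ≥ 1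
              refine ⟨R k (x1 - x2) + 1, ⟨by omega, by omega, by omega⟩, ?_⟩
              rw [oi_case3 (by omega) (by omega) h23, cond_unfold,
                  beta_case3 hs (by omega) (by omega) (by omega)]
              set b' := (x1 :: x2 :: x3 :: x4 :: l).countP (fun x => decide (x1 - (R k (x1 - x2) + 1) ≤ x)) - 2 with hb'
              have hR0 : R k (x2 - x3) = 0 := hq0
              rcases Nat.lt_or_ge x3 3 with h3e | h3e
              · -- x3 = 2, v = 1 : new C2 (odd) or C1 (even, KNice via N2)
                rcases Nat.even_or_odd b' with hev | hod
                · rw [Nat.even_iff] at hev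
                  refine Or.inl ⟨by omega, hev, Or.inr (Or.inl ⟨hq0, ?_⟩)⟩
                  have : R k x3 = x3 := R_small (by omega)
                  omega
                · rw [Nat.odd_iff] at hod
                  exact Or.inr (Or.inl ⟨by omega, hod, hq0⟩)
              · -- x3 ≥ 3, v = x3 - 1 ≥ 2 : new C3 (even) or C4 (odd, G2)
                rcases Nat.even_or_odd b' with hev | hod
                · rw [Nat.even_iff] at hev
                  exact Or.inr (Or.inr (Or.inl ⟨by omega, hev, hq0⟩))
                · rw [Nat.odd_iff] at hod
                  refine Or.inr (Or.inr (Or.inr ⟨by omega, hod, Or.inr (Or.inl ⟨hq0, ?_, ?_⟩)⟩))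
                  · rw [show x3 - (x1 - (R k (x1 - x2) + 1)) = 1 by omega]
                    rw [R_small (by omega)]
                  · rw [show x3 - (x1 - (R k (x1 - x2) + 1)) = 1 by omega]
                    rw [R_small (by omega)]
                    omega
      · by_cases hqk : R k (x2 - x3) = k
        · -- q = k ; p ≠ 1
          have hp1 : R k (x1 - x2) ≠ 1 := fun h =>
            hng (Or.inr (Or.inr ⟨h, hqk⟩))
          by_cases hp0 : R k (x1 - x2) = 0
          · by_cases hbig : k ≤ x1 - x2
            · -- t = k, branch 1, new G3
              have hge : k + 1 ≤ x1 - x2 := by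
                have h := R_ge_add k (x1 - x2); omega
              refine ⟨k, ⟨by omega, le_rfl, by omega⟩, ?_⟩
              rw [oi_case1 (by omega), cond_unfold, beta_case1 hs (by omega)]
              refine Or.inr (Or.inr (Or.inr ⟨h3ge, hpar, Or.inr (Or.inr ⟨?_, hqk⟩)⟩))
              rw [show x1 - k - x2 = x1 - x2 - k by omega]
              have f := R_split (k := k) (x := x1 - x2) (y := k) (by omega)
              have hRk : R k k = k := R_small le_rfl
              have b := R_lt k (x1 - x2 - k)
              omega
            · -- x1 = x2 ; t = k, branch 2, new G1
              have hx12 : x1 = x2 := by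
                have h := R_ge_add k (x1 - x2); omega
              have hq : k ≤ x2 - x3 := by omega
              refine ⟨k, ⟨by omega, le_rfl, by omega⟩, ?_⟩
              rw [oi_case2 (by omega) (by omega), cond_unfold,
                  beta_case2 hs (by omega) (by omega)]
              refine Or.inr (Or.inr (Or.inr ⟨h3ge, hpar, Or.inl ⟨?_, ?_⟩⟩))
              · rw [show x2 - (x1 - k) = k by omega]
                exact R_small le_rfl
              · rw [show x1 - k - x3 = x2 - x3 - k by omega]
                have f := R_split (k := k) (x := x2 - x3) (y := k) (by omega)
                have hRk : R k k = k := R_small le_rfl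
                have b := R_lt k (x2 - x3 - k)
                omega
          · -- p ≥ 2 ; t = p - 1, branch 1, new G3
            refine ⟨R k (x1 - x2) - 1, ⟨by omega, by omega, by omega⟩, ?_⟩
            rw [oi_case1 (by omega), cond_unfold, beta_case1 hs (by omega)]
            refine Or.inr (Or.inr (Or.inr ⟨h3ge, hpar, Or.inr (Or.inr ⟨?_, hqk⟩)⟩))
            rw [show x1 - (R k (x1 - x2) - 1) - x2 = x1 - x2 - (R k (x1 - x2) - 1) by omega]
            have f := R_split (k := k) (x := x1 - x2) (y := R k (x1 - x2) - 1) (by omega)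
            have hRR : R k (R k (x1 - x2) - 1) = R k (x1 - x2) - 1 := R_small (by omega)
            have b := R_lt k (x1 - x2 - (R k (x1 - x2) - 1))
            omega
        · -- 1 ≤ q ≤ k - 1 ; p ≠ 0 ; t = p, branch 1, new G2
          have hp : R k (x1 - x2) ≠ 0 := fun h =>
            hng (Or.inr (Or.inl ⟨h, by omega, by omega⟩))
          refine ⟨R k (x1 - x2), ⟨by omega, by omega, by omega⟩, ?_⟩
          rw [oi_case1 (by omega), cond_unfold, beta_case1 hs (by omega)]
          refine Or.inr (Or.inr (Or.inr ⟨h3ge, hpar, Or.inr (Or.inl ⟨?_, by omega, by omega⟩)⟩))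
          rw [show x1 - R k (x1 - x2) - x2 = x1 - x2 - R k (x1 - x2) by omega]
          have f := R_split (k := k) (x := x1 - x2) (y := R k (x1 - x2)) (by omega)
          have hRR : R k (R k (x1 - x2)) = R k (x1 - x2) := R_small (by omega)
          have b := R_lt k (x1 - x2 - R k (x1 - x2))
          omega
    · -- beta even : ¬C3 gives p ≠ 0 ; t = p, branch 1, new C3
      have hpar0 : beta (x1 :: x2 :: x3 :: x4 :: l) % 2 = 0 := by omega
      have hp : R k (x1 - x2) ≠ 0 := by
        intro h0
        exact hnc (Or.inr (Or.inr (Or.inl ⟨h3ge, hpar0, h0⟩)))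
      refine ⟨R k (x1 - x2), ⟨by omega, by omega, by omega⟩, ?_⟩
      rw [oi_case1 (by omega), cond_unfold, beta_case1 hs (by omega)]
      refine Or.inr (Or.inr (Or.inl ⟨h3ge, hpar0, ?_⟩))
      rw [show x1 - R k (x1 - x2) - x2 = x1 - x2 - R k (x1 - x2) by omega]
      have f := R_split (k := k) (x := x1 - x2) (y := R k (x1 - x2)) (by omega)
      have hRR : R k (R k (x1 - x2)) = R k (x1 - x2) := R_small (by omega)
      have b := R_lt k (x1 - x2 - R k (x1 - x2))
      omega

lemma four_of_len {S : List ℕ} (h : 4 ≤ S.length) :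
    ∃ a b c d m, S = a :: b :: c :: d :: m := by
  rcases S with _ | ⟨a, _ | ⟨b, _ | ⟨c, _ | ⟨d, m⟩⟩⟩⟩ <;> simp at h ⊢

lemma condA_zero {k : ℕ} (hk : 2 ≤ k) : ¬ CondA k 0 0 0 0 := by
  unfold CondA KGood KNice
  simp only [Nat.sub_self, Nat.sub_zero, R_zero]
  omega

lemma cond_sum_zero {k x1 x2 x3 x4 : ℕ} {l : List ℕ} (hk : 2 ≤ k)
    (hsum : (x1 :: x2 :: x3 :: x4 :: l).sum = 0)
    (hc : MiserePCond k (x1 :: x2 :: x3 :: x4 :: l)) : False := by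
  have h0 : x1 = 0 ∧ x2 = 0 ∧ x3 = 0 ∧ x4 = 0 := by
    simp only [List.sum_cons] at hsum
    omega
  obtain ⟨rfl, rfl, rfl, rfl⟩ := h0
  rw [cond_unfold] at hc
  have hb0 : beta (0 :: 0 :: 0 :: (0:ℕ) :: l) = 0 := by
    rw [beta]
    simp [heap3_cons]
  rw [hb0] at hc
  exact condA_zero hk hc

lemma cond_P {k : ℕ} (hk : 2 ≤ k) :
    ∀ (n : ℕ) (S : List ℕ), S.sum ≤ n → 4 ≤ S.length → S.Pairwise (· ≥ ·) →
      MiserePCond k S → MisereBP k S := by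
  intro n
  induction n with
  | zero =>
      intro S hsum hlen hs hc
      obtain ⟨x1, x2, x3, x4, l, rfl⟩ := four_of_len hlen
      exact absurd (cond_sum_zero hk (by omega) hc) not_false
  | succ n ih =>
      intro S hsum hlen hs hc
      obtain ⟨x1, x2, x3, x4, l, rfl⟩ := four_of_len hlen
      have hsumlt : ∀ S', BFollower k (x1 :: x2 :: x3 :: x4 :: l) S' →
          S'.sum < (x1 :: x2 :: x3 :: x4 :: l).sum := fun S' h => BFollower.sum_lt h
      rw [MisereBP]
      constructor
      · intro h0
        exact cond_sum_zero hk h0 hc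
      · rintro S' hF hBP'
        have hlt1 := hsumlt S' hF
        obtain ⟨t, ht1, ht2, rfl⟩ := hF
        simp only [List.headI_cons, List.tail_cons] at ht2 hBP' hlt1 ⊢
        have htk : t ≤ k := le_trans ht2 (min_le_right _ _)
        have htx : t ≤ x1 := le_trans ht2 (min_le_left _ _)
        have hnc' := lemA hk hs ht1 htk htx hc
        have hsort' : (List.orderedInsert (· ≥ ·) (x1 - t) (x2 :: x3 :: x4 :: l)).Pairwise
            (· ≥ ·) := (List.Pairwise.of_cons hs).orderedInsert _ _
        have hlen' : 4 ≤ (List.orderedInsert (· ≥ ·) (x1 - t) (x2 :: x3 :: x4 :: l)).length := by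
          rw [List.orderedInsert_length]
          simp
        rw [MisereBP] at hBP'
        obtain ⟨hsum'0, hall⟩ := hBP'
        obtain ⟨y1, y2, y3, y4, l', hE⟩ := four_of_len hlen'
        rw [hE] at hnc' hsum'0 hall hsort' hlt1
        obtain ⟨g12, g23, g34, g4l, gl⟩ := sorted_explode hsort'
        have hy1 : 1 ≤ y1 := by
          by_contra hy
          push_neg at hy
          apply hsum'0
          have hl0 : l'.sum = 0 := List.sum_eq_zero fun x hx => by
            have := g4l x hx; omega
          simp only [List.sum_cons, hl0]
          omega
        obtain ⟨t', ⟨ht'1, ht'k, ht'x⟩, hc''⟩ := lemB hk hsort' hy1 hnc'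
        have hF'' : BFollower k (y1 :: y2 :: y3 :: y4 :: l')
            (List.orderedInsert (· ≥ ·) (y1 - t') (y2 :: y3 :: y4 :: l')) := by
          refine ⟨t', ht'1, ?_, ?_⟩
          · simp only [List.headI_cons]
            exact le_min ht'x ht'k
          · simp only [List.headI_cons, List.tail_cons]
        refine hall _ hF'' (ih _ ?_ ?_ ?_ hc'')
        · have hlt2 := BFollower.sum_lt hF''
          omega
        · rw [List.orderedInsert_length]
          simp
        · exact (List.Pairwise.of_cons hsort').orderedInsert _ _

theorem stmt19 (k : ℕ) (hk : 2 ≤ k) (S : List ℕ) (hn : 4 ≤ S.length) (hsorted : S.Pairwise (· ≥ ·))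
    (h3 : 2 ≤ heap S 3) (hb : Odd (beta S))
    (hgood : KGood k (heap S 1) (heap S 2) (heap S 3)) :
    MisereBP k S := by
  have hc : MiserePCond k S :=
    Or.inr (Or.inr (Or.inr ⟨h3, hb, hgood⟩))
  exact cond_P hk S.sum S le_rfl hn hsorted hc
end
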